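/- arXiv:1705.01884 — 4 statements merged into one kernel-verified Lean document; each statement's English description precedes it below -/
import Mathlib

section
/- Let K ⊆ Homeo⁺([0,1]) be a compact set and let x₀, y₀ ∈ (0,1). Then there exists g ∈ Homeo⁺([0,1]) with g(x₀) = y₀ such that for every f ∈ K, both 0 and 1 are accumulation points of fix(g⁻¹ ∘ f). -/
open MeasureTheory unitInterval Set

noncomputable section

/-- A subset of a group with a measurable structure is *Haar null* (Christensen) if it is
contained in a Borel (here: measurable) set `B` admitting a Borel probability measure `μ`
all of whose two-sided translates `g • B • h` are `μ`-null. -/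
def IsHaarNull {G : Type*} [Group G] [MeasurableSpace G] (A : Set G) : Prop :=
  ∃ B : Set G, A ⊆ B ∧ MeasurableSet B ∧
    ∃ μ : Measure G, IsProbabilityMeasure μ ∧ ∀ g h : G, μ ((fun b => g * b * h) '' B) = 0

/-- The group of self-homeomorphisms of a space, with `(f * g) x = f (g x)`. -/
instance Homeomorph.instGroupSelf {X : Type*} [TopologicalSpace X] : Group (X ≃ₜ X) where
  mul f g := g.trans f
  one := Homeomorph.refl X
  inv := Homeomorph.symm
  mul_assoc _ _ _ := Homeomorph.ext fun _ => rfl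
  one_mul _ := Homeomorph.ext fun _ => rfl
  mul_one _ := Homeomorph.ext fun _ => rfl
  inv_mul_cancel f := Homeomorph.ext fun x => f.symm_apply_apply x

/-- The topology of uniform convergence (= compact-open topology, as the underlying space is
compact) on the self-homeomorphism group. -/
instance Homeomorph.instTopologicalSpaceSelf {X : Type*} [TopologicalSpace X] :
    TopologicalSpace (X ≃ₜ X) :=
  TopologicalSpace.induced (fun f => (⟨⇑f, f.continuous⟩ : C(X, X))) inferInstance

/-- The Polish group `Homeo⁺([0,1])` of increasing homeomorphisms of `[0,1]`. -/
def HomeoPlusI : Subgroup (I ≃ₜ I) where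
  carrier := {f | Monotone ⇑f}
  one_mem' := fun _ _ h => h
  mul_mem' := fun hf hg => hf.comp hg
  inv_mem' := by
    intro f hf a b hab
    show f.symm a ≤ f.symm b
    by_contra hcon
    push_neg at hcon
    have h1 : f (f.symm b) ≤ f (f.symm a) := hf hcon.le
    rw [f.apply_symm_apply, f.apply_symm_apply] at h1
    have : a = b := le_antisymm hab h1
    subst this
    exact lt_irrefl _ hcon

instance : MeasurableSpace HomeoPlusI := borel _
instance : BorelSpace HomeoPlusI := ⟨rfl⟩

/-- The set of fixed points of `f ∈ Homeo⁺([0,1])`. -/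
def fixSet (f : HomeoPlusI) : Set I := {x | (f : I ≃ₜ I) x = x}

namespace Stmt8Aux

lemma mono_of_mem (f : HomeoPlusI) : Monotone ⇑(f : I ≃ₜ I) := f.2

lemma fix0 (f : HomeoPlusI) : (f : I ≃ₜ I) 0 = 0 := by
  obtain ⟨y, hy⟩ := (f : I ≃ₜ I).surjective 0
  have h1 : (f : I ≃ₜ I) 0 ≤ (f : I ≃ₜ I) y := mono_of_mem f unitInterval.nonneg'
  rw [hy] at h1
  exact le_antisymm h1 unitInterval.nonneg'

lemma fix1 (f : HomeoPlusI) : (f : I ≃ₜ I) 1 = 1 := by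
  obtain ⟨y, hy⟩ := (f : I ≃ₜ I).surjective 1
  have h1 : (f : I ≃ₜ I) y ≤ (f : I ≃ₜ I) 1 := mono_of_mem f unitInterval.le_one'
  rw [hy] at h1
  exact le_antisymm unitInterval.le_one' h1

lemma continuous_eval (x : I) : Continuous fun f : HomeoPlusI => (f : I ≃ₜ I) x := by
  have h1 : Continuous fun f : I ≃ₜ I => (⟨⇑f, f.continuous⟩ : C(I, I)) :=
    continuous_induced_dom
  have h2 : Continuous fun f : HomeoPlusI => (f : I ≃ₜ I) := continuous_subtype_val
  exact ((continuous_eval_const (F := C(I, I)) x).comp h1).comp h2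

/-- Evaluation as a real-valued function on ℝ, clamping via `projIcc`. -/
def ev (f : HomeoPlusI) (x : ℝ) : ℝ :=
  ((f : I ≃ₜ I) (Set.projIcc 0 1 zero_le_one x) : ℝ)

lemma continuous_ev (f : HomeoPlusI) : Continuous (ev f) :=
  continuous_subtype_val.comp ((f : I ≃ₜ I).continuous.comp continuous_projIcc)

lemma continuous_ev_const (x : ℝ) : Continuous fun f : HomeoPlusI => ev f x :=
  continuous_subtype_val.comp (continuous_eval _)

lemma monotone_ev (f : HomeoPlusI) : Monotone (ev f) := fun a b hab => by
  exact Subtype.coe_le_coe.2 (mono_of_mem f (monotone_projIcc _ hab))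

lemma ev_of_mem (f : HomeoPlusI) {x : ℝ} (hx : x ∈ Set.Icc (0:ℝ) 1) :
    ev f x = ((f : I ≃ₜ I) ⟨x, hx⟩ : ℝ) := by
  rw [ev, Set.projIcc_of_mem]

lemma ev_zero (f : HomeoPlusI) : ev f 0 = 0 := by
  have : ev f 0 = ((f : I ≃ₜ I) ⟨0, by norm_num⟩ : ℝ) := ev_of_mem f (by norm_num)
  rw [this]
  have : (⟨0, by norm_num⟩ : I) = 0 := rfl
  rw [this, fix0]; rfl

lemma ev_one (f : HomeoPlusI) : ev f 1 = 1 := by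
  have : ev f 1 = ((f : I ≃ₜ I) ⟨1, by norm_num⟩ : ℝ) := ev_of_mem f (by norm_num)
  rw [this]
  have : (⟨1, by norm_num⟩ : I) = 1 := rfl
  rw [this, fix1]; rfl

lemma ev_mem (f : HomeoPlusI) (x : ℝ) : ev f x ∈ Set.Icc (0:ℝ) 1 :=
  ((f : I ≃ₜ I) _).2

lemma ev_pos (f : HomeoPlusI) {x : ℝ} (hx : 0 < x) (hx1 : x ≤ 1) : 0 < ev f x := by
  rcases lt_or_eq_of_le (ev_mem f x).1 with h | h
  · exact h
  · exfalso
    have hmem : x ∈ Set.Icc (0:ℝ) 1 := ⟨hx.le, hx1⟩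
    have h' : ((f : I ≃ₜ I) ⟨x, hmem⟩ : ℝ) = 0 := by rw [← ev_of_mem f hmem, ← h]
    have h0 : (f : I ≃ₜ I) ⟨x, hmem⟩ = (f : I ≃ₜ I) 0 := by
      rw [fix0]; exact Subtype.ext h'
    have := (f : I ≃ₜ I).injective h0
    have : x = 0 := congrArg Subtype.val this
    linarith

lemma ev_lt_one (f : HomeoPlusI) {x : ℝ} (hx : 0 ≤ x) (hx1 : x < 1) : ev f x < 1 := by
  rcases lt_or_eq_of_le (ev_mem f x).2 with h | h
  · exact h
  · exfalso
    have hmem : x ∈ Set.Icc (0:ℝ) 1 := ⟨hx, hx1.le⟩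
    have h' : ((f : I ≃ₜ I) ⟨x, hmem⟩ : ℝ) = 1 := by rw [← ev_of_mem f hmem, h]
    have hh : (f : I ≃ₜ I) ⟨x, hmem⟩ = (f : I ≃ₜ I) 1 := by
      rw [fix1]; exact Subtype.ext h'
    have := (f : I ≃ₜ I).injective hh
    have : x = 1 := congrArg Subtype.val this
    linarith

end Stmt8Aux
namespace Stmt8Aux

lemma lemB {K : Set HomeoPlusI} (hK : IsCompact K) {ε : ℝ} (hε : 0 < ε) :
    ∃ t : ℝ, 0 < t ∧ t < ε ∧ t < 1 ∧ ∀ f ∈ K, ev f t < ε := by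
  set r := min ε 1 / 2 with hr
  have hr0 : 0 < r := by
    have : 0 < min ε 1 := lt_min hε one_pos
    positivity
  have hrε : r < ε := by
    have : min ε 1 ≤ ε := min_le_left _ _
    simp only [hr]; linarith
  have hr1 : r < 1 := by
    have : min ε 1 ≤ 1 := min_le_right _ _
    simp only [hr]; linarith
  set t : ℕ → ℝ := fun n => r / (n + 1) with htdef
  have ht0 : ∀ n, 0 < t n := fun n => by positivity
  have htr : ∀ n, t n ≤ r := fun n => by
    rw [htdef]
    rw [div_le_iff₀ (by positivity)]
    nlinarith [hr0]
  have htmono : ∀ m n : ℕ, m ≤ n → t n ≤ t m := by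
    intro m n hmn
    apply div_le_div_of_nonneg_left hr0.le (by positivity)
    have : (m : ℝ) ≤ n := Nat.cast_le.2 hmn
    linarith
  have htlim : Filter.Tendsto t Filter.atTop (nhds 0) := by
    have h1 : Filter.Tendsto (fun n : ℕ => r / n) Filter.atTop (nhds 0) :=
      tendsto_const_div_atTop_nhds_zero_nat r
    have h2 := h1.comp (Filter.tendsto_add_atTop_nat 1)
    exact h2.congr fun n => by simp [Function.comp, htdef]
  set U : ℕ → Set HomeoPlusI := fun n => {f | ev f (t n) < ε} with hU
  have hUopen : ∀ n, IsOpen (U n) := fun n =>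
    isOpen_Iio.preimage (continuous_ev_const (t n))
  have hcov : K ⊆ ⋃ n, U n := by
    intro f _
    have h1 : Filter.Tendsto (fun n => ev f (t n)) Filter.atTop (nhds 0) := by
      have := ((continuous_ev f).tendsto 0).comp htlim
      simpa [ev_zero f, Function.comp_def] using this
    have h2 : ∀ᶠ n in Filter.atTop, ev f (t n) < ε := h1.eventually_lt_const hε
    obtain ⟨n, hn⟩ := h2.exists
    exact Set.mem_iUnion.2 ⟨n, hn⟩
  obtain ⟨s, hs⟩ := hK.elim_finite_subcover U hUopen hcov
  set N := s.sup id with hN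
  refine ⟨t N, ht0 N, lt_of_le_of_lt (htr N) hrε, lt_of_le_of_lt (htr N) hr1, ?_⟩
  intro f hf
  obtain ⟨n, hn, hfn⟩ := Set.mem_iUnion₂.1 (hs hf)
  have hle : t N ≤ t n := htmono n N (Finset.le_sup (f := id) hn)
  exact lt_of_le_of_lt (monotone_ev f hle) hfn

lemma lemB' {K : Set HomeoPlusI} (hK : IsCompact K) {ε : ℝ} (hε : 0 < ε) :
    ∃ t : ℝ, 0 < t ∧ 1 - ε < t ∧ t < 1 ∧ ∀ f ∈ K, 1 - ε < ev f t := by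
  set r := min ε 1 / 2 with hr
  have hr0 : 0 < r := by
    have : 0 < min ε 1 := lt_min hε one_pos
    positivity
  have hrε : r < ε := by
    have : min ε 1 ≤ ε := min_le_left _ _
    simp only [hr]; linarith
  have hr1 : r < 1 := by
    have : min ε 1 ≤ 1 := min_le_right _ _
    simp only [hr]; linarith
  set t : ℕ → ℝ := fun n => 1 - r / (n + 1) with htdef
  have haux : ∀ n : ℕ, 0 < r / (n + 1) ∧ r / (n + 1) ≤ r := by
    intro n
    constructor
    · positivity
    · rw [div_le_iff₀ (by positivity)]
      nlinarith [hr0]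
  have ht0 : ∀ n, 0 < t n := fun n => by
    have := (haux n).2; simp only [htdef]; linarith
  have htr : ∀ n, 1 - r ≤ t n := fun n => by
    have := (haux n).2; simp only [htdef]; linarith
  have htlt1 : ∀ n, t n < 1 := fun n => by
    have := (haux n).1; simp only [htdef]; linarith
  have htmono : ∀ m n : ℕ, m ≤ n → t m ≤ t n := by
    intro m n hmn
    have : r / (n + 1) ≤ r / (m + 1) := by
      apply div_le_div_of_nonneg_left hr0.le (by positivity)
      have : (m : ℝ) ≤ n := Nat.cast_le.2 hmn
      linarith
    simp only [htdef]; linarith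
  have htlim : Filter.Tendsto t Filter.atTop (nhds 1) := by
    have h1 : Filter.Tendsto (fun n : ℕ => r / n) Filter.atTop (nhds 0) :=
      tendsto_const_div_atTop_nhds_zero_nat r
    have h2 := h1.comp (Filter.tendsto_add_atTop_nat 1)
    have h3 := (tendsto_const_nhds (x := (1:ℝ)) (f := Filter.atTop)).sub h2
    have h4 : Filter.Tendsto (fun n : ℕ => 1 - r / ↑(n + 1)) Filter.atTop (nhds 1) := by
      simpa using h3
    exact h4.congr fun n => by push_cast; ring
  set U : ℕ → Set HomeoPlusI := fun n => {f | 1 - ε < ev f (t n)} with hU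
  have hUopen : ∀ n, IsOpen (U n) := fun n =>
    isOpen_Ioi.preimage (continuous_ev_const (t n))
  have hcov : K ⊆ ⋃ n, U n := by
    intro f _
    have h1 : Filter.Tendsto (fun n => ev f (t n)) Filter.atTop (nhds 1) := by
      have := ((continuous_ev f).tendsto 1).comp htlim
      simpa [ev_one f, Function.comp_def] using this
    have h2 : ∀ᶠ n in Filter.atTop, 1 - ε < ev f (t n) :=
      h1.eventually_const_lt (by linarith)
    obtain ⟨n, hn⟩ := h2.exists
    exact Set.mem_iUnion.2 ⟨n, hn⟩
  obtain ⟨s, hs⟩ := hK.elim_finite_subcover U hUopen hcov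
  set N := s.sup id with hN
  refine ⟨t N, ht0 N, lt_of_lt_of_le (by linarith [hrε] : 1 - ε < 1 - r) (htr N), htlt1 N, ?_⟩
  intro f hf
  obtain ⟨n, hn, hfn⟩ := Set.mem_iUnion₂.1 (hs hf)
  have hle : t n ≤ t N := htmono n N (Finset.le_sup (f := id) hn)
  exact lt_of_lt_of_le hfn (monotone_ev f hle)

lemma lemC {K : Set HomeoPlusI} (hK : IsCompact K) {t : ℝ} (ht0 : 0 < t) (ht1 : t ≤ 1) :
    ∃ ε : ℝ, 0 < ε ∧ ∀ f ∈ K, ε ≤ ev f t := by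
  rcases K.eq_empty_or_nonempty with h | h
  · exact ⟨1, one_pos, by simp [h]⟩
  · set J := (fun f => ev f t) '' K with hJ
    have hJc : IsCompact J := hK.image (continuous_ev_const t)
    have hJne : J.Nonempty := h.image _
    refine ⟨sInf J, ?_, ?_⟩
    · obtain ⟨f, hf, hfe⟩ := hJc.sInf_mem hJne
      rw [← hfe]
      exact ev_pos f ht0 ht1
    · intro f hf
      exact csInf_le hJc.bddBelow ⟨f, hf, rfl⟩

lemma lemC' {K : Set HomeoPlusI} (hK : IsCompact K) {t : ℝ} (ht0 : 0 ≤ t) (ht1 : t < 1) :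
    ∃ ε : ℝ, ε < 1 ∧ ∀ f ∈ K, ev f t ≤ ε := by
  rcases K.eq_empty_or_nonempty with h | h
  · exact ⟨1/2, by norm_num, by simp [h]⟩
  · set J := (fun f => ev f t) '' K with hJ
    have hJc : IsCompact J := hK.image (continuous_ev_const t)
    have hJne : J.Nonempty := h.image _
    refine ⟨sSup J, ?_, ?_⟩
    · obtain ⟨f, hf, hfe⟩ := hJc.sSup_mem hJne
      rw [← hfe]
      exact ev_lt_one f ht0 ht1
    · intro f hf
      exact le_csSup hJc.bddAbove ⟨f, hf, rfl⟩

end Stmt8Aux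
namespace Stmt8Aux

lemma exists_seq_rec {α : Type*} (P : α → Prop) (R : ℕ → α → α → Prop) (init : α)
    (hinit : P init) (hstep : ∀ n a, P a → ∃ b, P b ∧ R n a b) :
    ∃ f : ℕ → α, f 0 = init ∧ (∀ n, P (f n)) ∧ ∀ n, R n (f n) (f (n + 1)) := by
  choose g hg1 hg2 using hstep
  let f : ℕ → {a : α // P a} := fun n =>
    Nat.rec ⟨init, hinit⟩ (fun n a => ⟨g n a.1 a.2, hg1 n a.1 a.2⟩) n
  exact ⟨fun n => (f n).1, rfl, fun n => (f n).2, fun n => hg2 n (f n).1 (f n).2⟩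

lemma decay_facts (a : ℕ → ℝ) (hpos : ∀ n, 0 < a n) (hdec : ∀ n, a (n + 1) ≤ a n / 2) :
    StrictAnti a ∧ Filter.Tendsto a Filter.atTop (nhds 0) := by
  have hsa : StrictAnti a := strictAnti_nat_of_succ_lt fun n => by
    have := hdec n; have := hpos n; linarith
  refine ⟨hsa, ?_⟩
  have hb : ∀ n, a n ≤ a 0 * (1 / 2) ^ n := by
    intro n
    induction n with
    | zero => simp
    | succ n ih =>
      have h1 := hdec n
      have h2 : a n / 2 ≤ a 0 * (1 / 2) ^ n / 2 := by linarith
      calc a (n + 1) ≤ a 0 * (1 / 2) ^ n / 2 := le_trans h1 h2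
        _ = a 0 * (1 / 2) ^ (n + 1) := by ring
  have hgeo : Filter.Tendsto (fun n : ℕ => a 0 * (1 / 2) ^ n) Filter.atTop (nhds 0) := by
    have := tendsto_pow_atTop_nhds_zero_of_lt_one (by norm_num : (0:ℝ) ≤ 1/2) (by norm_num)
    simpa using (this.const_mul (a 0))
  exact squeeze_zero (fun n => (hpos n).le) hb hgeo

lemma seq0 {K : Set HomeoPlusI} (hK : IsCompact K) {x0 y0 : ℝ}
    (hx : x0 ∈ Set.Ioo (0:ℝ) 1) (hy : y0 ∈ Set.Ioo (0:ℝ) 1) :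
    ∃ a v : ℕ → ℝ, a 0 = x0 ∧ v 0 = y0 ∧ (∀ n, 0 < a n) ∧ (∀ n, 0 < v n) ∧
      (∀ n, a (n + 1) ≤ a n / 2) ∧ (∀ n, v (n + 1) ≤ v n / 2) ∧
      (∀ n, Odd n → ∀ f ∈ K, ev f (a n) ≤ v n) ∧
      (∀ n, Even n → 0 < n → ∀ f ∈ K, v n ≤ ev f (a n)) := by
  set P : ℝ × ℝ → Prop := fun p => 0 < p.1 ∧ p.1 ≤ 1 ∧ 0 < p.2 with hP
  set R : ℕ → ℝ × ℝ → ℝ × ℝ → Prop := fun n p q =>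
    q.1 ≤ p.1 / 2 ∧ q.2 ≤ p.2 / 2 ∧
      (Odd (n + 1) → ∀ f ∈ K, ev f q.1 ≤ q.2) ∧
      (Even (n + 1) → ∀ f ∈ K, q.2 ≤ ev f q.1) with hR
  have hstep : ∀ n p, P p → ∃ q, P q ∧ R n p q := by
    intro n p hp
    obtain ⟨hp1, hp2, hp3⟩ := hp
    rcases Nat.even_or_odd (n + 1) with he | ho
    · -- even step : go below all f
      have ht0 : (0:ℝ) < p.1 / 2 := by linarith
      have ht1 : p.1 / 2 ≤ 1 := by linarith
      obtain ⟨ε, hε0, hε⟩ := lemC hK ht0 ht1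
      refine ⟨(p.1 / 2, min ε (p.2 / 2)), ⟨ht0, by linarith, ?_⟩, ?_, ?_, ?_, ?_⟩
      · exact lt_min hε0 (by linarith)
      · exact le_refl _
      · exact min_le_right _ _
      · intro h; exact absurd he (Nat.not_even_iff_odd.mpr h)
      · intro _ f hf
        exact le_trans (min_le_left _ _) (hε f hf)
    · -- odd step : go above all f
      set ε := min (p.1 / 2) (p.2 / 2) with hε
      have hε0 : 0 < ε := lt_min (by linarith) (by linarith)
      obtain ⟨t, ht0, htε, ht1, ht⟩ := lemB hK hε0
      refine ⟨(t, ε), ⟨ht0, ht1.le, hε0⟩, ?_, min_le_right _ _, ?_, ?_⟩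
      · exact le_trans htε.le (min_le_left _ _)
      · intro _ f hf; exact (ht f hf).le
      · intro h; exact absurd h (Nat.not_even_iff_odd.mpr ho)
  obtain ⟨F, hF0, hFP, hFR⟩ := exists_seq_rec P R (x0, y0)
    ⟨hx.1, hx.2.le, hy.1⟩ hstep
  refine ⟨fun n => (F n).1, fun n => (F n).2, by show (F 0).1 = _; rw [hF0], by show (F 0).2 = _; rw [hF0],
    fun n => (hFP n).1, fun n => (hFP n).2.2, fun n => (hFR n).1, fun n => (hFR n).2.1,
    ?_, ?_⟩
  · intro n hn f hf
    obtain ⟨k, hk⟩ : ∃ k, n = k + 1 := by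
      cases n with
      | zero => exact absurd hn (by simp)
      | succ k => exact ⟨k, rfl⟩
    subst hk
    exact (hFR k).2.2.1 hn f hf
  · intro n hn hn0 f hf
    obtain ⟨k, hk⟩ : ∃ k, n = k + 1 := by
      cases n with
      | zero => exact absurd hn0 (by simp)
      | succ k => exact ⟨k, rfl⟩
    subst hk
    exact (hFR k).2.2.2 hn f hf

lemma seq1 {K : Set HomeoPlusI} (hK : IsCompact K) {x0 y0 : ℝ}
    (hx : x0 ∈ Set.Ioo (0:ℝ) 1) (hy : y0 ∈ Set.Ioo (0:ℝ) 1) :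
    ∃ c u : ℕ → ℝ, c 0 = 1 - x0 ∧ u 0 = 1 - y0 ∧ (∀ n, 0 < c n) ∧ (∀ n, 0 < u n) ∧
      (∀ n, c (n + 1) ≤ c n / 2) ∧ (∀ n, u (n + 1) ≤ u n / 2) ∧
      (∀ n, Odd n → ∀ f ∈ K, 1 - u n ≤ ev f (1 - c n)) ∧
      (∀ n, Even n → 0 < n → ∀ f ∈ K, ev f (1 - c n) ≤ 1 - u n) := by
  set P : ℝ × ℝ → Prop := fun p => 0 < p.1 ∧ p.1 ≤ 1 ∧ 0 < p.2 with hP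
  set R : ℕ → ℝ × ℝ → ℝ × ℝ → Prop := fun n p q =>
    q.1 ≤ p.1 / 2 ∧ q.2 ≤ p.2 / 2 ∧
      (Odd (n + 1) → ∀ f ∈ K, 1 - q.2 ≤ ev f (1 - q.1)) ∧
      (Even (n + 1) → ∀ f ∈ K, ev f (1 - q.1) ≤ 1 - q.2) with hR
  have hstep : ∀ n p, P p → ∃ q, P q ∧ R n p q := by
    intro n p hp
    obtain ⟨hp1, hp2, hp3⟩ := hp
    rcases Nat.even_or_odd (n + 1) with he | ho
    · -- even step : go above all f (f below 1 - u)
      have ht0 : (0:ℝ) ≤ 1 - p.1 / 2 := by linarith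
      have ht1 : 1 - p.1 / 2 < 1 := by linarith
      obtain ⟨ε, hε1, hε⟩ := lemC' hK ht0 ht1
      have hε1' : 0 < 1 - ε := by linarith
      refine ⟨(p.1 / 2, min (1 - ε) (p.2 / 2)), ⟨by linarith, by linarith, ?_⟩,
        le_refl _, min_le_right _ _, ?_, ?_⟩
      · exact lt_min hε1' (by linarith)
      · intro h; exact absurd he (Nat.not_even_iff_odd.mpr h)
      · intro _ f hf
        have h1 : ev f (1 - p.1 / 2) ≤ ε := hε f hf
        have h2 : min (1 - ε) (p.2 / 2) ≤ 1 - ε := min_le_left _ _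
        simp only
        linarith
    · -- odd step : f above 1 - u
      set ε := min (p.1 / 2) (p.2 / 2) with hε
      have hε0 : 0 < ε := lt_min (by linarith) (by linarith)
      obtain ⟨t, ht0, htε, ht1, ht⟩ := lemB' hK hε0
      refine ⟨(1 - t, ε), ⟨show (0:ℝ) < 1 - t by linarith, show (1:ℝ) - t ≤ 1 by linarith, hε0⟩, ?_, min_le_right _ _, ?_, ?_⟩
      · have : 1 - t < ε := by linarith
        exact le_trans this.le (min_le_left _ _)
      · intro _ f hf
        have h1 : 1 - ε < ev f t := ht f hf
        have h2 : (1:ℝ) - (1 - t) = t := by ring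
        simp only [h2]
        linarith [min_le_left (p.1/2) (p.2/2), min_le_right (p.1/2) (p.2/2)]
      · intro h; exact absurd h (Nat.not_even_iff_odd.mpr ho)
  obtain ⟨F, hF0, hFP, hFR⟩ := exists_seq_rec P R (1 - x0, 1 - y0)
    ⟨show (0:ℝ) < 1 - x0 by linarith [hx.2], show (1:ℝ) - x0 ≤ 1 by linarith [hx.1], show (0:ℝ) < 1 - y0 by linarith [hy.2]⟩ hstep
  refine ⟨fun n => (F n).1, fun n => (F n).2, by show (F 0).1 = _; rw [hF0], by show (F 0).2 = _; rw [hF0],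
    fun n => (hFP n).1, fun n => (hFP n).2.2, fun n => (hFR n).1, fun n => (hFR n).2.1,
    ?_, ?_⟩
  · intro n hn f hf
    obtain ⟨k, hk⟩ : ∃ k, n = k + 1 := by
      cases n with
      | zero => exact absurd hn (by simp)
      | succ k => exact ⟨k, rfl⟩
    subst hk
    exact (hFR k).2.2.1 hn f hf
  · intro n hn hn0 f hf
    obtain ⟨k, hk⟩ : ∃ k, n = k + 1 := by
      cases n with
      | zero => exact absurd hn0 (by simp)
      | succ k => exact ⟨k, rfl⟩
    subst hk
    exact (hFR k).2.2.2 hn f hf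

end Stmt8Aux
namespace Stmt8Aux

lemma pl_interp (a v : ℕ → ℝ) (hapos : ∀ n, 0 < a n) (hvpos : ∀ n, 0 < v n)
    (ha : StrictAnti a) (hv : StrictAnti v)
    (hal : Filter.Tendsto a Filter.atTop (nhds 0))
    (hvl : Filter.Tendsto v Filter.atTop (nhds 0)) :
    ∃ F : ℝ → ℝ, Continuous F ∧ StrictMono F ∧ F 0 = 0 ∧ (∀ n, F (a n) = v n) ∧
      ∀ x, a 0 ≤ x → F x = x - a 0 + v 0 := by
  have hex : ∀ x : ℝ, 0 < x → ∃ n, a n < x := fun x hx =>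
    (hal.eventually_lt_const hx).exists
  -- the linear piece through (a (k+1), v (k+1)) and (a k, v k)
  set L : ℕ → ℝ → ℝ := fun k x =>
    v (k + 1) + (x - a (k + 1)) * ((v k - v (k + 1)) / (a k - a (k + 1))) with hL
  have hadiff : ∀ k, 0 < a k - a (k + 1) := fun k => by
    have := ha (Nat.lt_succ_self k); linarith
  have hvdiff : ∀ k, 0 < v k - v (k + 1) := fun k => by
    have := hv (Nat.lt_succ_self k); linarith
  have hslope : ∀ k, 0 < (v k - v (k + 1)) / (a k - a (k + 1)) := fun k =>
    div_pos (hvdiff k) (hadiff k)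
  have hLa : ∀ k, L k (a (k + 1)) = v (k + 1) := fun k => by simp [hL]
  have hLb : ∀ k, L k (a k) = v k := fun k => by
    have h := (hadiff k).ne'
    have h2 : (a k - a (k + 1)) * ((v k - v (k + 1)) / (a k - a (k + 1))) = v k - v (k + 1) := by
      field_simp
    simp only [hL]; rw [h2]; ring
  have hLmono : ∀ k, StrictMono (L k) := fun k x y hxy => by
    have h := hslope k
    simp only [hL]
    nlinarith
  set F : ℝ → ℝ := fun x =>
    if hx : 0 < x then
      (if x < a 0 then L (Nat.find (hex x hx) - 1) x else x - a 0 + v 0)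
    else x with hF
  have hFneg : ∀ x : ℝ, ¬0 < x → F x = x := fun x hx => dif_neg hx
  have hFaff : ∀ x : ℝ, a 0 ≤ x → F x = x - a 0 + v 0 := fun x hx => by
    have h0 : 0 < x := lt_of_lt_of_le (hapos 0) hx
    simp only [hF]
    rw [dif_pos h0, if_neg (not_lt.2 hx)]
  have hFL : ∀ k (x : ℝ), a (k + 1) < x → x ≤ a k → F x = L k x := by
    intro k x h1 h2
    have h0 : 0 < x := lt_trans (hapos (k + 1)) h1
    rcases lt_or_eq_of_le (le_trans h2 (ha.antitone (Nat.zero_le k))) with hlt | heq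
    · -- x < a 0
      have hfind : Nat.find (hex x h0) = k + 1 := by
        rw [Nat.find_eq_iff]
        refine ⟨h1, ?_⟩
        intro j hj
        have : a k ≤ a j := ha.antitone (Nat.lt_succ_iff.mp hj)
        exact not_lt.2 (le_trans h2 this)
      simp only [hF]
      rw [dif_pos h0, if_pos hlt, hfind]
      norm_num
    · -- x = a 0, forces k = 0
      have hk0 : k = 0 := by
        by_contra hk
        have hk1 : 1 ≤ k := Nat.one_le_iff_ne_zero.2 hk
        have : a k < a 0 := ha (Nat.pos_of_ne_zero hk)
        have : x < a 0 := lt_of_le_of_lt h2 this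
        linarith [heq]
      subst hk0
      have hx0 : x = a 0 := le_antisymm (heq.symm ▸ le_refl _) (heq ▸ le_refl _)
      rw [hFaff x hx0.ge, hx0, hLb 0]
      ring
  have hbr : ∀ x : ℝ, 0 < x → x ≤ a 0 → ∃ k, a (k + 1) < x ∧ x ≤ a k := by
    intro x hx hxa
    set n := Nat.find (hex x hx) with hn
    have hspec : a n < x := Nat.find_spec (hex x hx)
    have hn1 : 1 ≤ n := by
      rcases Nat.eq_zero_or_pos n with h | h
      · exfalso; rw [h] at hspec; linarith
      · exact h
    refine ⟨n - 1, ?_, ?_⟩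
    · have heq : n - 1 + 1 = n := by omega
      rwa [heq]
    · have := Nat.find_min (hex x hx) (m := n - 1) (by omega)
      exact not_lt.1 this
  have hFval : ∀ n, F (a n) = v n := by
    intro n
    cases n with
    | zero => rw [hFaff (a 0) le_rfl]; ring
    | succ k =>
      rw [hFL (k + 1) (a (k + 1)) (ha (Nat.lt_succ_self (k + 1))) le_rfl, hLb]
  have hFbounds : ∀ k (x : ℝ), a (k + 1) < x → x ≤ a k → v (k + 1) < F x ∧ F x ≤ v k := by
    intro k x h1 h2
    rw [hFL k x h1 h2]
    constructor
    · rw [← hLa k]; exact hLmono k h1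
    · rw [← hLb k]; exact (hLmono k).monotone h2
  have hFpos : ∀ x : ℝ, 0 < x → 0 < F x := by
    intro x hx
    rcases le_or_gt (a 0) x with h | h
    · rw [hFaff x h]; have := hvpos 0; linarith
    · obtain ⟨k, hk1, hk2⟩ := hbr x hx h.le
      exact lt_trans (hvpos (k + 1)) (hFbounds k x hk1 hk2).1
  have hFlt : ∀ x : ℝ, 0 < x → x < a 0 → F x < v 0 := by
    intro x hx hxa
    obtain ⟨k, hk1, hk2⟩ := hbr x hx hxa.le
    cases k with
    | zero =>
      rw [hFL 0 x hk1 hk2, ← hLb 0]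
      exact hLmono 0 hxa
    | succ j =>
      have h1 : F x ≤ v (j + 1) := (hFbounds (j + 1) x hk1 hk2).2
      have h2 : v (j + 1) < v 0 := hv (Nat.succ_pos j)
      linarith
  have hF0 : F 0 = 0 := hFneg 0 (lt_irrefl 0)
  have hFmono : StrictMono F := by
    intro x y hxy
    rcases le_or_gt y 0 with hy0 | hy0
    · rw [hFneg x (by linarith), hFneg y (by linarith)]; exact hxy
    rcases le_or_gt x 0 with hx0 | hx0
    · rw [hFneg x (by linarith)]
      exact lt_of_le_of_lt hx0 (hFpos y hy0)
    -- both positive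
    rcases le_or_gt (a 0) x with hax | hax
    · rw [hFaff x hax, hFaff y (by linarith)]; linarith
    rcases le_or_gt (a 0) y with hay | hay
    · have h1 : F x < v 0 := hFlt x hx0 hax
      have h2 : F y = y - a 0 + v 0 := hFaff y hay
      have : v 0 ≤ F y := by rw [h2]; linarith
      linarith
    -- both in (0, a 0)
    obtain ⟨kx, hkx1, hkx2⟩ := hbr x hx0 hax.le
    obtain ⟨ky, hky1, hky2⟩ := hbr y hy0 hay.le
    have hkyx : ky ≤ kx := by
      by_contra hcon
      push_neg at hcon
      have h1 : a ky ≤ a (kx + 1) := ha.antitone hcon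
      linarith
    rcases eq_or_lt_of_le hkyx with heq | hlt
    · subst heq
      rw [hFL ky x hkx1 hkx2, hFL ky y hky1 hky2]
      exact hLmono ky hxy
    · have h1 : F x ≤ v kx := (hFbounds kx x hkx1 hkx2).2
      have h2 : v (ky + 1) < F y := (hFbounds ky y hky1 hky2).1
      have h3 : v kx ≤ v (ky + 1) := hv.antitone (Nat.succ_le_of_lt hlt)
      linarith
  have hFcont : Continuous F := by
    rw [continuous_iff_continuousAt]
    intro x
    rcases lt_trichotomy x 0 with hx0 | hx0 | hx0
    · -- negative: F = id near x
      have hmem : Set.Iio (0:ℝ) ∈ nhds x := Iio_mem_nhds hx0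
      exact continuousAt_id.congr
        (Filter.eventuallyEq_of_mem hmem fun y hy => (hFneg y (not_lt.2 (le_of_lt hy))).symm)
    · -- continuity at 0
      subst hx0
      rw [Metric.continuousAt_iff]
      intro ε hε
      obtain ⟨n, hn⟩ := (hvl.eventually_lt_const hε).exists
      refine ⟨min ε (a n), lt_min hε (hapos n), ?_⟩
      intro z hz
      rw [Real.dist_eq, sub_zero] at hz
      rw [Real.dist_eq, hF0, sub_zero]
      have hz1 : z < a n := lt_of_lt_of_le (lt_of_abs_lt hz) (min_le_right _ _)
      have hz2 : |z| < ε := lt_of_lt_of_le hz (min_le_left _ _)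
      rcases le_or_gt z 0 with hzneg | hzpos
      · rw [hFneg z (not_lt.2 hzneg)]; exact hz2
      · have hza0 : z ≤ a 0 := le_trans hz1.le (ha.antitone (Nat.zero_le n))
        obtain ⟨k, hk1, hk2⟩ := hbr z hzpos hza0
        have hnk : n ≤ k := by
          have h1 : a (k + 1) < a n := lt_trans hk1 hz1
          have := ha.lt_iff_gt.mp h1
          omega
        have h1 : F z ≤ v k := (hFbounds k z hk1 hk2).2
        have h2 : v k ≤ v n := hv.antitone hnk
        have h3 : 0 < F z := hFpos z hzpos
        rw [abs_of_pos h3]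
        linarith
    · -- positive
      rcases le_or_gt x (a 0) with hxa | hxa
      swap
      · -- x > a 0 : affine near x
        have hmem : Set.Ioi (a 0) ∈ nhds x := Ioi_mem_nhds hxa
        have hcont : ContinuousAt (fun z : ℝ => z - a 0 + v 0) x := by fun_prop
        exact hcont.congr
          (Filter.eventuallyEq_of_mem hmem fun y hy => (hFaff y (le_of_lt hy)).symm)
      obtain ⟨k, hk1, hk2⟩ := hbr x hx0 hxa
      have hLc : ∀ j, Continuous (L j) := fun j => by
        simp only [hL]; fun_prop
      rcases lt_or_eq_of_le hk2 with hxk | hxk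
      · -- interior of a piece
        have hmem : Set.Ioo (a (k + 1)) (a k) ∈ nhds x := Ioo_mem_nhds hk1 hxk
        exact (hLc k).continuousAt.congr
          (Filter.eventuallyEq_of_mem hmem fun y hy => (hFL k y hy.1 hy.2.le).symm)
      · -- x = a k : glue left and right pieces
        have cleft : ContinuousWithinAt F (Set.Iic x) x := by
          have hmem : Set.Ioc (a (k + 1)) x ∈ nhdsWithin x (Set.Iic x) := by
            rw [← Set.Ioi_inter_Iic]
            exact Filter.inter_mem
              (mem_nhdsWithin_of_mem_nhds (Ioi_mem_nhds hk1)) self_mem_nhdsWithin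
          refine ((hLc k).continuousAt.continuousWithinAt).congr_of_eventuallyEq
            (Filter.eventuallyEq_of_mem hmem fun y hy => ?_) ?_
          · exact hFL k y hy.1 (hy.2.trans_eq hxk)
          · exact hFL k x hk1 hk2
        have cright : ContinuousWithinAt F (Set.Ici x) x := by
          cases k with
          | zero =>
            -- x = a 0 : affine on the right
            have hcont : ContinuousAt (fun z : ℝ => z - a 0 + v 0) x := by fun_prop
            refine (hcont.continuousWithinAt).congr_of_eventuallyEq
              (Filter.eventuallyEq_of_mem self_mem_nhdsWithin fun y hy => ?_) ?_
            · exact hFaff y (hxk ▸ hy)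
            · exact hFaff x hxk.ge
          | succ j =>
            -- x = a (j+1), use piece L j on the right
            have hxaj : x < a j := hxk ▸ ha (Nat.lt_succ_self j)
            have hmem : Set.Ico x (a j) ∈ nhdsWithin x (Set.Ici x) := by
              rw [← Set.Iio_inter_Ici]
              exact Filter.inter_mem
                (mem_nhdsWithin_of_mem_nhds (Iio_mem_nhds hxaj)) self_mem_nhdsWithin
            have hFLx : F x = L j x := by
              rw [hxk, hFval (j + 1), ← hLa j]
            refine ((hLc j).continuousAt.continuousWithinAt).congr_of_eventuallyEq
              (Filter.eventuallyEq_of_mem hmem fun y hy => ?_) hFLx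
            rcases eq_or_lt_of_le hy.1 with hyx | hyx
            · rw [← hyx]; exact hFLx
            · exact hFL j y (hxk ▸ hyx) hy.2.le
        have := cleft.union cright
        rwa [Set.Iic_union_Ici, continuousWithinAt_univ] at this
  exact ⟨F, hFcont, hFmono, hF0, hFval, hFaff⟩

end Stmt8Aux
namespace Stmt8Aux

lemma exists_homeo (G : ℝ → ℝ) (hGc : Continuous G) (hGm : StrictMono G)
    (h0 : G 0 = 0) (h1 : G 1 = 1) :
    ∃ g : HomeoPlusI, ∀ x : I, ((g : I ≃ₜ I) x : ℝ) = G ↑x := by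
  have hmaps : ∀ x : I, G ↑x ∈ Set.Icc (0:ℝ) 1 := fun x =>
    ⟨h0 ▸ hGm.monotone x.2.1, h1 ▸ hGm.monotone x.2.2⟩
  set T : I → I := fun x => ⟨G ↑x, hmaps x⟩ with hT
  have hinj : Function.Injective T := fun x y h =>
    Subtype.ext (hGm.injective (congrArg Subtype.val h))
  have hsurj : Function.Surjective T := by
    intro y
    have hiv := intermediate_value_Icc (zero_le_one (α := ℝ)) hGc.continuousOn
    rw [h0, h1] at hiv
    obtain ⟨x, hx, hGx⟩ := hiv y.2
    exact ⟨⟨x, hx⟩, Subtype.ext hGx⟩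
  set e : I ≃ I := Equiv.ofBijective T ⟨hinj, hsurj⟩ with he
  have hcont : Continuous e := by
    have : Continuous T := ((hGc.comp continuous_subtype_val)).subtype_mk _
    exact this
  set homeo : I ≃ₜ I := hcont.homeoOfEquivCompactToT2 with hh
  have hmono : Monotone ⇑homeo := by
    intro x y hxy
    show T x ≤ T y
    exact Subtype.mk_le_mk.2 (hGm.monotone (Subtype.coe_le_coe.2 hxy))
  exact ⟨⟨homeo, hmono⟩, fun x => rfl⟩

end Stmt8Aux

/-- Given a compact `K ⊆ Homeo⁺([0,1])` and `x₀, y₀ ∈ (0,1)`, there is `g ∈ Homeo⁺([0,1])` with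
`g x₀ = y₀` such that `0` and `1` are accumulation points of `fix (g⁻¹ ∘ f)` for all `f ∈ K`. -/
theorem stmt_8 (K : Set HomeoPlusI) (hK : IsCompact K) (x₀ y₀ : I)
    (hx₀ : (x₀ : ℝ) ∈ Set.Ioo (0 : ℝ) 1) (hy₀ : (y₀ : ℝ) ∈ Set.Ioo (0 : ℝ) 1) :
    ∃ g : HomeoPlusI, (g : I ≃ₜ I) x₀ = y₀ ∧
      ∀ f ∈ K, AccPt (0 : I) (Filter.principal (fixSet (g⁻¹ * f))) ∧
        AccPt (1 : I) (Filter.principal (fixSet (g⁻¹ * f))) := by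
  classical
  open Stmt8Aux in
  set K' : Set HomeoPlusI := insert 1 K with hK'def
  have hK'c : IsCompact K' := hK.insert 1
  obtain ⟨a, va, ha0, hva0, hapos, hvapos, hadec, hvadec, haodd, haeven⟩ :=
    Stmt8Aux.seq0 hK'c hx₀ hy₀
  obtain ⟨c, u, hc0, hu0, hcpos, hupos, hcdec, hudec, hcodd, hceven⟩ :=
    Stmt8Aux.seq1 hK'c hx₀ hy₀
  obtain ⟨hsa, hal⟩ := Stmt8Aux.decay_facts a hapos hadec
  obtain ⟨hsva, hval⟩ := Stmt8Aux.decay_facts va hvapos hvadec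
  obtain ⟨hsc, hcl⟩ := Stmt8Aux.decay_facts c hcpos hcdec
  obtain ⟨hsu, hul⟩ := Stmt8Aux.decay_facts u hupos hudec
  obtain ⟨F0, hF0c, hF0m, hF00, hF0val, hF0aff⟩ :=
    Stmt8Aux.pl_interp a va hapos hvapos hsa hsva hal hval
  obtain ⟨F1, hF1c, hF1m, hF10, hF1val, hF1aff⟩ :=
    Stmt8Aux.pl_interp c u hcpos hupos hsc hsu hcl hul
  -- agreement at x₀
  have hF0x : F0 (x₀ : ℝ) = (y₀ : ℝ) := by rw [← ha0, hF0val 0, hva0]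
  have hF1x : F1 (1 - (x₀ : ℝ)) = 1 - (y₀ : ℝ) := by rw [← hc0, hF1val 0, hu0]
  set G : ℝ → ℝ := fun x => if x ≤ (x₀ : ℝ) then F0 x else 1 - F1 (1 - x) with hG
  have hGleft : ∀ x : ℝ, x ≤ (x₀ : ℝ) → G x = F0 x := fun x hx => if_pos hx
  have hGright : ∀ x : ℝ, (x₀ : ℝ) ≤ x → G x = 1 - F1 (1 - x) := by
    intro x hx
    rcases eq_or_lt_of_le hx with heq | hlt
    · rw [← heq, hGleft _ le_rfl, hF0x, hF1x]; ring
    · exact if_neg (not_le.2 hlt)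
  have hGcont : Continuous G := by
    apply Continuous.if_le hF0c (by fun_prop) continuous_id continuous_const
    intro x hx
    have hx' : x = (x₀ : ℝ) := hx
    rw [hx', hF0x, hF1x]; ring
  have hGm : StrictMono G := by
    intro x y hxy
    rcases le_or_gt y (x₀ : ℝ) with hy | hy
    · rw [hGleft x (by linarith), hGleft y hy]
      exact hF0m hxy
    rcases le_or_gt x (x₀ : ℝ) with hx | hx
    · rw [hGleft x hx, hGright y hy.le]
      have h1 : F0 x ≤ (y₀ : ℝ) := hF0x ▸ hF0m.monotone hx
      have h2 : F1 (1 - y) < 1 - (y₀ : ℝ) := hF1x ▸ hF1m (by linarith)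
      linarith
    · rw [hGright x hx.le, hGright y hy.le]
      have := hF1m (show (1:ℝ) - y < 1 - x by linarith)
      linarith
  have hG0 : G 0 = 0 := by rw [hGleft 0 (le_of_lt hx₀.1), hF00]
  have hG1 : G 1 = 1 := by
    rw [hGright 1 (le_of_lt hx₀.2)]
    norm_num [hF10]
  obtain ⟨g, hg⟩ := Stmt8Aux.exists_homeo G hGcont hGm hG0 hG1
  have hGa : ∀ n, G (a n) = va n := fun n => by
    rw [hGleft (a n) (le_trans (hsa.antitone (Nat.zero_le n)) (le_of_eq ha0)), hF0val n]
  have hGc' : ∀ n, G (1 - c n) = 1 - u n := fun n => by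
    have h1 : c n ≤ 1 - (x₀ : ℝ) := le_trans (hsc.antitone (Nat.zero_le n)) (le_of_eq hc0)
    have hsimp : 1 - (1 - c n) = c n := by ring
    rw [hGright (1 - c n) (by linarith), hsimp, hF1val n]
  -- fixed-point criterion
  have hfix : ∀ (f : HomeoPlusI) (z : I), Stmt8Aux.ev f ↑z = G ↑z → z ∈ fixSet (g⁻¹ * f) := by
    intro f z hz
    have hfz : (f : I ≃ₜ I) z = (g : I ≃ₜ I) z := by
      apply Subtype.ext
      rw [hg z, ← hz, Stmt8Aux.ev_of_mem f z.2]
    show ((g⁻¹ * f : HomeoPlusI) : I ≃ₜ I) z = z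
    have hco : ((g⁻¹ * f : HomeoPlusI) : I ≃ₜ I) z = ((g : I ≃ₜ I)).symm ((f : I ≃ₜ I) z) := rfl
    rw [hco, hfz]
    exact (g : I ≃ₜ I).symm_apply_apply z
  have h2m1 : Filter.Tendsto (fun m : ℕ => 2 * m + 1) Filter.atTop Filter.atTop :=
    Filter.tendsto_atTop_atTop.2 fun b => ⟨b, fun m hm => by omega⟩
  refine ⟨g, ?_, ?_⟩
  · apply Subtype.ext
    rw [hg x₀, hGleft _ le_rfl, hF0x]
  intro f hf
  have hf' : f ∈ K' := Set.mem_insert_of_mem _ hf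
  set φ : ℝ → ℝ := fun x => Stmt8Aux.ev f x - G x with hφ
  have hφc : Continuous φ := (Stmt8Aux.continuous_ev f).sub hGcont
  constructor
  · -- accumulation at 0
    have hcross : ∀ m : ℕ, ∃ z : I, z ∈ fixSet (g⁻¹ * f) ∧
        a (2 * m + 2) ≤ ↑z ∧ (z : ℝ) ≤ a (2 * m + 1) := by
      intro m
      have hle : a (2 * m + 2) ≤ a (2 * m + 1) := (hsa (by omega)).le
      have hub : φ (a (2 * m + 1)) ≤ 0 := by
        have h1 := haodd (2 * m + 1) ⟨m, by ring⟩ f hf'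
        have h2 := hGa (2 * m + 1)
        simp only [hφ]; linarith
      have hlb : 0 ≤ φ (a (2 * m + 2)) := by
        have h1 := haeven (2 * m + 2) ⟨m + 1, by ring⟩ (by omega) f hf'
        have h2 := hGa (2 * m + 2)
        simp only [hφ]; linarith
      have hiv := intermediate_value_Icc' hle hφc.continuousOn
      have h0mem : (0:ℝ) ∈ Set.Icc (φ (a (2*m+1))) (φ (a (2*m+2))) := ⟨hub, hlb⟩
      obtain ⟨z, hz1, hz2⟩ := hiv h0mem
      have hzI : z ∈ Set.Icc (0:ℝ) 1 := by
        constructor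
        · exact le_trans (hapos _).le hz1.1
        · have := le_trans hz1.2 (le_trans (hsa.antitone (Nat.zero_le _)) (le_of_eq ha0))
          linarith [hx₀.2]
      refine ⟨⟨z, hzI⟩, hfix f ⟨z, hzI⟩ ?_, hz1.1, hz1.2⟩
      have : φ z = 0 := hz2
      simp only [hφ] at this
      linarith [this]
    choose zs hzs1 hzs2 hzs3 using hcross
    have hzlim : Filter.Tendsto zs Filter.atTop (nhds (0 : I)) := by
      rw [tendsto_subtype_rng]
      have hupper : ∀ m, (zs m : ℝ) ≤ a (2 * m + 1) := hzs3
      have htb : Filter.Tendsto (fun m : ℕ => a (2 * m + 1)) Filter.atTop (nhds 0) :=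
        hal.comp h2m1
      have := squeeze_zero (fun m => (zs m).2.1) hupper htb
      simpa using this
    rw [accPt_iff_nhds]
    intro U hU
    obtain ⟨m, hm⟩ := (hzlim.eventually (eventually_mem_nhds_iff.mpr hU)).exists
    · refine ⟨zs m, ⟨?_, hzs1 m⟩, ?_⟩
      · exact mem_of_mem_nhds hm
      · intro hcon
        have : (zs m : ℝ) = 0 := by rw [hcon]; rfl
        have := hzs2 m
        have hpos := hapos (2 * m + 2)
        linarith
  · -- accumulation at 1
    have hcross : ∀ m : ℕ, ∃ z : I, z ∈ fixSet (g⁻¹ * f) ∧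
        1 - c (2 * m + 1) ≤ ↑z ∧ (z : ℝ) ≤ 1 - c (2 * m + 2) := by
      intro m
      have hle : 1 - c (2 * m + 1) ≤ 1 - c (2 * m + 2) := by
        have := (hsc (show 2*m+1 < 2*m+2 by omega)).le; linarith
      have hlb : 0 ≤ φ (1 - c (2 * m + 1)) := by
        have h1 := hcodd (2 * m + 1) ⟨m, by ring⟩ f hf'
        have h2 := hGc' (2 * m + 1)
        simp only [hφ]; linarith
      have hub : φ (1 - c (2 * m + 2)) ≤ 0 := by
        have h1 := hceven (2 * m + 2) ⟨m + 1, by ring⟩ (by omega) f hf'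
        have h2 := hGc' (2 * m + 2)
        simp only [hφ]; linarith
      have hiv := intermediate_value_Icc' hle hφc.continuousOn
      have h0mem : (0:ℝ) ∈ Set.Icc (φ (1 - c (2*m+2))) (φ (1 - c (2*m+1))) := ⟨hub, hlb⟩
      obtain ⟨z, hz1, hz2⟩ := hiv h0mem
      have hzI : z ∈ Set.Icc (0:ℝ) 1 := by
        constructor
        · have h1 : c (2*m+1) ≤ 1 - (x₀ : ℝ) :=
            le_trans (hsc.antitone (Nat.zero_le _)) (le_of_eq hc0)
          have := hz1.1
          linarith [hx₀.1]
        · have := hz1.2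
          linarith [hcpos (2*m+2)]
      refine ⟨⟨z, hzI⟩, hfix f ⟨z, hzI⟩ ?_, hz1.1, hz1.2⟩
      have : φ z = 0 := hz2
      simp only [hφ] at this
      linarith [this]
    choose zs hzs1 hzs2 hzs3 using hcross
    have hzlim : Filter.Tendsto zs Filter.atTop (nhds (1 : I)) := by
      rw [tendsto_subtype_rng]
      have hlow : Filter.Tendsto (fun m : ℕ => 1 - c (2 * m + 1)) Filter.atTop (nhds 1) := by
        have := (tendsto_const_nhds (x := (1:ℝ)) (f := Filter.atTop)).sub (hcl.comp h2m1)
        simpa using this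
      have hhigh : Filter.Tendsto (fun _ : ℕ => (1:ℝ)) Filter.atTop (nhds 1) :=
        tendsto_const_nhds
      have := tendsto_of_tendsto_of_tendsto_of_le_of_le hlow hhigh
        (fun m => hzs2 m) (fun m => (zs m).2.2)
      simpa using this
    rw [accPt_iff_nhds]
    intro U hU
    obtain ⟨m, hm⟩ := (hzlim.eventually (eventually_mem_nhds_iff.mpr hU)).exists
    · refine ⟨zs m, ⟨?_, hzs1 m⟩, ?_⟩
      · exact mem_of_mem_nhds hm
      · intro hcon
        have : (zs m : ℝ) = 1 := by rw [hcon]; rfl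
        have := hzs3 m
        have hpos := hcpos (2 * m + 2)
        linarith

end
end

section
/- Let K ⊆ Homeo⁺([0,1]) be a compact set and let x₀, y₀ ∈ (0,1) be such that f(x₀) > y₀ for every f ∈ K. Then there exists g ∈ Homeo⁺([0,1]) such that g(x₀) = y₀ and g(x) < f(x) for every x ∈ (0,1) and every f ∈ K. -/
open MeasureTheory unitInterval Set

noncomputable section

namespace StmtNine

lemma coe_strictMono (f : HomeoPlusI) : StrictMono ⇑(f : I ≃ₜ I) :=
  f.2.strictMono_of_injective (f : I ≃ₜ I).injective

lemma map_zero' (f : HomeoPlusI) : (f : I ≃ₜ I) 0 = 0 := by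
  obtain ⟨x, hx⟩ := (f : I ≃ₜ I).surjective 0
  have h1 : (f : I ≃ₜ I) 0 ≤ (f : I ≃ₜ I) x := f.2 (by exact_mod_cast x.2.1)
  rw [hx] at h1
  exact le_antisymm h1 (by exact_mod_cast ((f : I ≃ₜ I) 0).2.1)

lemma map_one' (f : HomeoPlusI) : (f : I ≃ₜ I) 1 = 1 := by
  obtain ⟨x, hx⟩ := (f : I ≃ₜ I).surjective 1
  have h1 : (f : I ≃ₜ I) x ≤ (f : I ≃ₜ I) 1 := f.2 (by exact_mod_cast x.2.2)
  rw [hx] at h1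
  exact le_antisymm (by exact_mod_cast ((f : I ≃ₜ I) 1).2.2) h1

lemma exists_homeo (u : I → I) (hsm : StrictMono u) (hc : Continuous u)
    (h0 : u 0 = 0) (h1 : u 1 = 1) : ∃ g : HomeoPlusI, ⇑(g : I ≃ₜ I) = u := by
  have hsurj : Function.Surjective u := by
    intro y
    have hy : y ∈ Set.Icc (u 0) (u 1) := by
      rw [h0, h1]
      exact ⟨by exact_mod_cast y.2.1, by exact_mod_cast y.2.2⟩
    exact intermediate_value_univ 0 1 hc hy
  let e := Equiv.ofBijective u ⟨hsm.injective, hsurj⟩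
  have hce : Continuous e := hc
  refine ⟨⟨hce.homeoOfEquivCompactToT2, ?_⟩, rfl⟩
  show Monotone _
  exact hsm.monotone

lemma exists_PL (x₀ : I) (hx₀ : (x₀ : ℝ) ∈ Set.Ioo (0:ℝ) 1) (b : ℝ)
    (hb : b ∈ Set.Ioo (0:ℝ) 1) :
    ∃ φ : HomeoPlusI, (((φ : I ≃ₜ I) x₀ : I) : ℝ) = b ∧
      (b ≤ (x₀ : ℝ) → ∀ x : I, (((φ : I ≃ₜ I) x : I) : ℝ) ≤ (x : ℝ)) := by
  obtain ⟨ha0, ha1⟩ := hx₀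
  obtain ⟨hb0, hb1⟩ := hb
  set a : ℝ := (x₀ : ℝ) with ha
  set r1 : ℝ := b / a with hr1def
  set r2 : ℝ := (1 - b) / (1 - a) with hr2def
  have hr1 : a * r1 = b := mul_div_cancel₀ _ (ne_of_gt ha0)
  have hr2 : (1 - a) * r2 = 1 - b := by
    rw [hr2def]
    exact mul_div_cancel₀ _ (by linarith)
  have hr1p : 0 < r1 := div_pos hb0 ha0
  have hr2p : 0 < r2 := div_pos (by linarith) (by linarith)
  set p : ℝ → ℝ := fun t => if t ≤ a then t * r1 else b + (t - a) * r2 with hp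
  have hpa : ∀ t : ℝ, t ≤ a → p t = t * r1 := fun t ht => if_pos ht
  have hpb : ∀ t : ℝ, ¬ t ≤ a → p t = b + (t - a) * r2 := fun t ht => if_neg ht
  have hmem : ∀ x : I, p (x : ℝ) ∈ I := by
    intro x
    obtain ⟨hx0, hx1⟩ := x.2
    by_cases hle : (x : ℝ) ≤ a
    · rw [hpa _ hle]
      exact ⟨by positivity, by nlinarith [mul_le_mul_of_nonneg_right hle hr1p.le]⟩
    · push_neg at hle
      rw [hpb _ (not_le.2 hle)]
      constructor
      · nlinarith
      · nlinarith [mul_le_mul_of_nonneg_right (show (x:ℝ) - a ≤ 1 - a by linarith) hr2p.le]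
  have hsm : StrictMono fun x : I => (⟨p (x : ℝ), hmem x⟩ : I) := by
    intro x y hxy
    have hxy' : (x : ℝ) < (y : ℝ) := hxy
    show (⟨p (x:ℝ), _⟩ : I) < ⟨p (y:ℝ), _⟩
    rw [Subtype.mk_lt_mk]
    obtain ⟨hx0, hx1⟩ := x.2
    obtain ⟨hy0, hy1⟩ := y.2
    by_cases h1 : (y : ℝ) ≤ a
    · have h2 : (x : ℝ) ≤ a := le_of_lt (lt_of_lt_of_le hxy' h1)
      rw [hpa _ h2, hpa _ h1]
      nlinarith
    · push_neg at h1
      by_cases h2 : (x : ℝ) ≤ a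
      · rw [hpa _ h2, hpb _ (not_le.2 h1)]
        nlinarith [mul_le_mul_of_nonneg_right h2 hr1p.le]
      · push_neg at h2
        rw [hpb _ (not_le.2 h2), hpb _ (not_le.2 h1)]
        nlinarith
  have hcp : Continuous p := by
    apply Continuous.if_le (by continuity) (by continuity) continuous_id continuous_const
    intro t ht
    have ht' : t = a := ht
    subst ht'
    linear_combination hr1
  have hcont : Continuous fun x : I => (⟨p (x : ℝ), hmem x⟩ : I) :=
    Continuous.subtype_mk (hcp.comp continuous_subtype_val) _
  have h0 : (⟨p ((0:I) : ℝ), hmem 0⟩ : I) = 0 := by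
    apply Subtype.ext
    show p 0 = 0
    rw [hpa _ ha0.le]
    ring
  have h1' : (⟨p ((1:I) : ℝ), hmem 1⟩ : I) = 1 := by
    apply Subtype.ext
    show p 1 = 1
    rw [hpb _ (not_le.2 (by exact_mod_cast ha1))]
    nlinarith
  obtain ⟨φ, hφ⟩ := exists_homeo _ hsm hcont h0 h1'
  refine ⟨φ, ?_, ?_⟩
  · rw [hφ]
    show p a = b
    rw [hpa _ le_rfl]
    linear_combination hr1
  · intro hba x
    rw [hφ]
    show p (x : ℝ) ≤ (x : ℝ)
    obtain ⟨hx0, hx1⟩ := x.2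
    by_cases hle : (x : ℝ) ≤ a
    · rw [hpa _ hle]
      have : r1 ≤ 1 := by rw [hr1def, div_le_one ha0]; linarith
      nlinarith
    · push_neg at hle
      rw [hpb _ (not_le.2 hle)]
      have key : (b + ((x:ℝ) - a) * r2 - (x:ℝ)) * (1 - a) = (b - a) * (1 - (x:ℝ)) := by
        linear_combination ((x:ℝ) - a) * hr2
      have h4 : (b + ((x:ℝ) - a) * r2 - (x:ℝ)) * (1 - a) ≤ 0 * (1 - a) := by
        rw [zero_mul, key]
        exact mul_nonpos_of_nonpos_of_nonneg (by linarith) (by linarith)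
      have h5 := le_of_mul_le_mul_right h4 (show (0:ℝ) < 1 - a by linarith)
      linarith
  
end StmtNine

open StmtNine in
/-- Given a compact `K ⊆ Homeo⁺([0,1])` and `x₀, y₀ ∈ (0,1)` with `f x₀ > y₀` for all `f ∈ K`,
there is `g ∈ Homeo⁺([0,1])` with `g x₀ = y₀` lying strictly below every `f ∈ K` on `(0,1)`. -/
theorem stmt_9 (K : Set HomeoPlusI) (hK : IsCompact K) (x₀ y₀ : I)
    (hx₀ : (x₀ : ℝ) ∈ Set.Ioo (0 : ℝ) 1) (hy₀ : (y₀ : ℝ) ∈ Set.Ioo (0 : ℝ) 1)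
    (h : ∀ f ∈ K, (y₀ : ℝ) < (((f : I ≃ₜ I) x₀ : I) : ℝ)) :
    ∃ g : HomeoPlusI, (g : I ≃ₜ I) x₀ = y₀ ∧
      ∀ x : I, (x : ℝ) ∈ Set.Ioo (0 : ℝ) 1 → ∀ f ∈ K,
        (((g : I ≃ₜ I) x : I) : ℝ) < (((f : I ≃ₜ I) x : I) : ℝ) := by
  rcases K.eq_empty_or_nonempty with rfl | hne
  · obtain ⟨φ, hφ1, _⟩ := exists_PL x₀ hx₀ (y₀ : ℝ) hy₀
    exact ⟨φ, Subtype.ext hφ1, fun x hx f hf => absurd hf (Set.notMem_empty f)⟩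
  set ev : I → HomeoPlusI → ℝ := fun x f => (((f : I ≃ₜ I) x : I) : ℝ) with hev_def
  have hev : Continuous (Function.uncurry ev) := by
    have hj : Continuous fun f : HomeoPlusI =>
        (⟨⇑(f : I ≃ₜ I), (f : I ≃ₜ I).continuous⟩ : C(I, I)) := by
      show Continuous ((fun f : I ≃ₜ I => (⟨⇑f, f.continuous⟩ : C(I, I))) ∘
        (fun f : HomeoPlusI => (f : I ≃ₜ I)))
      exact continuous_induced_dom.comp continuous_subtype_val
    have h2 : Continuous fun q : I × HomeoPlusI =>
        ((⟨⇑(q.2 : I ≃ₜ I), (q.2 : I ≃ₜ I).continuous⟩ : C(I, I)) q.1 : I) :=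
      ContinuousEval.continuous_eval.comp ((hj.comp continuous_snd).prodMk continuous_fst)
    exact continuous_subtype_val.comp h2
  have hevx : ∀ x : I, Continuous (ev x) :=
    fun x => hev.comp (continuous_const.prodMk continuous_id)
  set m : I → ℝ := fun x => sInf (ev x '' K) with hm_def
  have hm : Continuous m := hK.continuous_sInf hev
  have hattain : ∀ x : I, m x ∈ ev x '' K :=
    fun x => (hK.image (hevx x)).sInf_mem (hne.image _)
  have hle : ∀ x : I, ∀ f ∈ K, m x ≤ ev x f :=
    fun x f hf => csInf_le (hK.image (hevx x)).bddBelow ⟨f, hf, rfl⟩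
  have hmono : Monotone m := by
    intro x y hxy
    obtain ⟨f, hfK, hfy⟩ := hattain y
    calc m x ≤ ev x f := hle x f hfK
    _ ≤ ev y f := by exact_mod_cast Subtype.coe_le_coe.2 (f.2 hxy)
    _ = m y := hfy
  have hm0 : ∀ x : I, 0 ≤ m x := by
    intro x
    obtain ⟨f, hfK, hfx⟩ := hattain x
    rw [← hfx]
    exact (((f : I ≃ₜ I) x : I)).2.1
  have hmpos : ∀ x : I, 0 < (x : ℝ) → 0 < m x := by
    intro x hx
    obtain ⟨f, hfK, hfx⟩ := hattain x
    rw [← hfx]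
    have h0x : (0 : I) < x := by exact_mod_cast hx
    have := (coe_strictMono f) h0x
    rw [map_zero' f] at this
    exact_mod_cast this
  have hmle1 : ∀ x : I, m x ≤ 1 := by
    intro x
    obtain ⟨f, hfK, hfx⟩ := hattain x
    rw [← hfx]
    exact (((f : I ≃ₜ I) x : I)).2.2
  have hA : (y₀ : ℝ) < m x₀ := by
    obtain ⟨f, hfK, hfx⟩ := hattain x₀
    rw [← hfx]
    exact h f hfK
  have hApos : 0 < m x₀ := lt_of_le_of_lt y₀.2.1 hA
  set c : ℝ := (((y₀ : ℝ) / m x₀) + 1) / 2 with hc_def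
  have hc0 : 0 < c := by
    have hd : 0 ≤ (y₀ : ℝ) / m x₀ := div_nonneg y₀.2.1 hApos.le
    rw [hc_def]; linarith
  have hc1 : c < 1 := by
    have : (y₀ : ℝ) / m x₀ < 1 := (div_lt_one hApos).2 hA
    rw [hc_def]; linarith
  have hdiv : (y₀ : ℝ) / m x₀ < c := by
    have h1 : (y₀ : ℝ) / m x₀ < 1 := (div_lt_one hApos).2 hA
    rw [hc_def]; linarith
  have hcy : (y₀ : ℝ) < c * m x₀ := by
    have := (div_lt_iff₀ hApos).1 hdiv
    linarith
  have humem : ∀ x : I, m x * (c + (1 - c) * (x : ℝ)) ∈ I := by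
    intro x
    obtain ⟨hx0, hx1⟩ := x.2
    constructor
    · apply mul_nonneg (hm0 x); nlinarith
    · apply mul_le_one₀ (hmle1 x) (by nlinarith); nlinarith
  set u : I → I := fun x => ⟨m x * (c + (1 - c) * (x : ℝ)), humem x⟩ with hu_def
  have husm : StrictMono u := by
    intro x y hxy
    have hxy' : (x : ℝ) < (y : ℝ) := hxy
    show (⟨_, humem x⟩ : I) < ⟨_, humem y⟩
    rw [Subtype.mk_lt_mk]
    have hmxy : m x ≤ m y := hmono hxy.le
    have hmy : 0 < m y := hmpos y (lt_of_le_of_lt x.2.1 hxy')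
    have hsx : 0 ≤ c + (1 - c) * (x : ℝ) := by nlinarith [x.2.1]
    have hss : c + (1 - c) * (x : ℝ) < c + (1 - c) * (y : ℝ) := by nlinarith
    calc m x * (c + (1 - c) * (x : ℝ)) ≤ m y * (c + (1 - c) * (x : ℝ)) :=
          mul_le_mul_of_nonneg_right hmxy hsx
    _ < m y * (c + (1 - c) * (y : ℝ)) := by exact mul_lt_mul_of_pos_left hss hmy
  have hucont : Continuous u := by
    apply Continuous.subtype_mk
    exact hm.mul (continuous_const.add (continuous_const.mul continuous_subtype_val))
  have hu0 : u 0 = 0 := by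
    apply Subtype.ext
    show m 0 * _ = (0 : ℝ)
    have hm00 : m 0 = 0 := by
      obtain ⟨f, hfK, hfx⟩ := hattain 0
      rw [← hfx]
      show (((f : I ≃ₜ I) 0 : I) : ℝ) = 0
      rw [map_zero' f]
      rfl
    rw [hm00, zero_mul]
  have hu1 : u 1 = 1 := by
    apply Subtype.ext
    show m 1 * _ = (1 : ℝ)
    have hm11 : m 1 = 1 := by
      obtain ⟨f, hfK, hfx⟩ := hattain 1
      rw [← hfx]
      show (((f : I ≃ₜ I) 1 : I) : ℝ) = 1
      rw [map_one' f]
      rfl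
    rw [hm11, one_mul]
    show c + (1 - c) * ((1 : I) : ℝ) = 1
    norm_num
  obtain ⟨gm, hgm⟩ := exists_homeo u husm hucont hu0 hu1
  have hgmx₀ : (y₀ : ℝ) < (((gm : I ≃ₜ I) x₀ : I) : ℝ) := by
    rw [hgm]
    show (y₀ : ℝ) < m x₀ * (c + (1 - c) * (x₀ : ℝ))
    nlinarith [hcy, mul_nonneg hApos.le (mul_nonneg (show (0:ℝ) ≤ 1 - c by linarith) x₀.2.1)]
  set x₁ : I := (gm : I ≃ₜ I).symm y₀ with hx₁_def
  have hgx₁ : (gm : I ≃ₜ I) x₁ = y₀ := (gm : I ≃ₜ I).apply_symm_apply y₀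
  have hx₁lt : x₁ < x₀ := by
    apply (coe_strictMono gm).lt_iff_lt.1
    rw [hgx₁]
    exact_mod_cast hgmx₀
  have hx₁pos : (0 : I) < x₁ := by
    apply (coe_strictMono gm).lt_iff_lt.1
    rw [hgx₁]
    have : (gm : I ≃ₜ I) 0 = 0 := by rw [hgm]; exact hu0
    rw [this]
    exact_mod_cast hy₀.1
  have hx₁mem : (x₁ : ℝ) ∈ Set.Ioo (0 : ℝ) 1 := by
    constructor
    · exact_mod_cast hx₁pos
    · exact lt_trans (by exact_mod_cast hx₁lt) hx₀.2
  obtain ⟨φ, hφx₀, hφle'⟩ := exists_PL x₀ hx₀ (x₁ : ℝ) hx₁mem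
  have hφle : ∀ x : I, (φ : I ≃ₜ I) x ≤ x := by
    intro x
    exact Subtype.coe_le_coe.1 (hφle' (by exact_mod_cast hx₁lt.le) x)
  refine ⟨gm * φ, ?_, ?_⟩
  · show (gm : I ≃ₜ I) ((φ : I ≃ₜ I) x₀) = y₀
    have : (φ : I ≃ₜ I) x₀ = x₁ := Subtype.ext hφx₀
    rw [this, hgx₁]
  · intro x hx f hf
    show (((gm : I ≃ₜ I) ((φ : I ≃ₜ I) x) : I) : ℝ) < _
    have h1 : ((gm : I ≃ₜ I) ((φ : I ≃ₜ I) x) : I) ≤ (gm : I ≃ₜ I) x :=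
      gm.2 (hφle x)
    have h2 : (((gm : I ≃ₜ I) x : I) : ℝ) < m x := by
      rw [hgm]
      show m x * (c + (1 - c) * (x : ℝ)) < m x
      have hmx := hmpos x hx.1
      nlinarith [mul_pos hmx (mul_pos (show (0:ℝ) < 1 - c by linarith)
        (show (0:ℝ) < 1 - (x : ℝ) by linarith [hx.2]))]
    have h3 : m x ≤ (((f : I ≃ₜ I) x : I) : ℝ) := hle x f hf
    have h1' : (((gm : I ≃ₜ I) ((φ : I ≃ₜ I) x) : I) : ℝ) ≤ (((gm : I ≃ₜ I) x : I) : ℝ) :=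
      Subtype.coe_le_coe.2 h1
    linarith


end
end

section
/- Let p, q be relatively prime integers with 0 ≤ p < q and let n be a positive integer. There exists f ∈ Homeo⁺(S¹) with rotation number τ(f) = p/q (mod 1) having exactly n periodic points, all of which are crossing, if and only if q divides n and n/q is even. -/
open MeasureTheory Set Function

noncomputable section

/-- `F : ℝ ≃ₜ ℝ` is a lift of the circle homeomorphism `f` if it is (strictly) increasing,
commutes with the unit translation and projects to `f` under the projection `ℝ → ℝ/ℤ`. -/
def IsLift (F : ℝ ≃ₜ ℝ) (f : UnitAddCircle ≃ₜ UnitAddCircle) : Prop :=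
  StrictMono F ∧ (∀ x : ℝ, F (x + 1) = F x + 1) ∧
    ∀ x : ℝ, f (x : UnitAddCircle) = ((F x : ℝ) : UnitAddCircle)

/-- The Polish group `Homeo⁺(S¹)` of orientation-preserving homeomorphisms of the circle
`S¹ = ℝ/ℤ`, i.e. those homeomorphisms admitting an increasing lift. -/
def HomeoPlusCircle : Subgroup (UnitAddCircle ≃ₜ UnitAddCircle) where
  carrier := {f | ∃ F : ℝ ≃ₜ ℝ, IsLift F f}
  one_mem' := ⟨Homeomorph.refl ℝ, strictMono_id, fun _ => rfl, fun _ => rfl⟩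
  mul_mem' := by
    rintro a b ⟨A, hAm, hAp, hAl⟩ ⟨B, hBm, hBp, hBl⟩
    refine ⟨B.trans A, hAm.comp hBm, fun x => ?_, fun x => ?_⟩
    · show A (B (x + 1)) = A (B x) + 1
      rw [hBp, hAp]
    · show a (b (x : UnitAddCircle)) = ((A (B x) : ℝ) : UnitAddCircle)
      rw [hBl, hAl]
  inv_mem' := by
    rintro f ⟨F, hFm, hFp, hFl⟩
    refine ⟨F.symm, fun a b hab => ?_, fun x => ?_, fun x => ?_⟩
    · have h : F (F.symm a) < F (F.symm b) := by
        rw [F.apply_symm_apply, F.apply_symm_apply]; exact hab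
      exact hFm.lt_iff_lt.mp h
    · apply F.injective
      rw [F.apply_symm_apply, hFp, F.apply_symm_apply]
    · show f.symm (x : UnitAddCircle) = ((F.symm x : ℝ) : UnitAddCircle)
      have h : f ((F.symm x : ℝ) : UnitAddCircle) = ((x : ℝ) : UnitAddCircle) := by
        rw [hFl, F.apply_symm_apply]
      rw [← h, f.symm_apply_apply]

instance : MeasurableSpace HomeoPlusCircle := borel _
instance : BorelSpace HomeoPlusCircle := ⟨rfl⟩

/-- The degree one lift associated to an increasing lift of a circle homeomorphism. -/
def toCircleDeg1Lift (F : ℝ ≃ₜ ℝ) (hm : Monotone ⇑F) (hp : ∀ x : ℝ, F (x + 1) = F x + 1) :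
    CircleDeg1Lift :=
  ⟨⟨⇑F, hm⟩, hp⟩

/-- `f` has rotation number `α ∈ ℝ/ℤ`: some (equivalently, any) increasing lift of `f` has
translation number representing `α` modulo `1`. -/
def HasRotationNumber (f : UnitAddCircle ≃ₜ UnitAddCircle) (α : UnitAddCircle) : Prop :=
  ∃ F : ℝ ≃ₜ ℝ, ∃ hF : IsLift F f,
    (((toCircleDeg1Lift F hF.1.monotone hF.2.1).translationNumber : ℝ) : UnitAddCircle) = α

/-- `x` is a crossing fixed point of the circle homeomorphism `g`: near a representative `x'` of
`x` (with `G x' = x' + k` for a lift `G`), the lift takes values both below and above the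
translated diagonal `y ↦ y + k` in every neighbourhood of `x'`. -/
def IsCrossingFixedPt (g : UnitAddCircle ≃ₜ UnitAddCircle) (x : UnitAddCircle) : Prop :=
  ∀ G : ℝ ≃ₜ ℝ, IsLift G g → ∀ x' : ℝ, (x' : UnitAddCircle) = x → ∀ k : ℤ, G x' = x' + k →
    ∀ ε > (0 : ℝ),
      (∃ y₁ ∈ Set.Ioo (x' - ε) (x' + ε), G y₁ < y₁ + k) ∧
      (∃ y₂ ∈ Set.Ioo (x' - ε) (x' + ε), y₂ + k < G y₂)

/-- A periodic point `x` of `f` of least period `n` is crossing if it is a crossing fixed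
point of `fⁿ`. -/
def IsCrossingPeriodicPt (f : UnitAddCircle ≃ₜ UnitAddCircle) (x : UnitAddCircle) : Prop :=
  IsCrossingFixedPt (f ^ Function.minimalPeriod (⇑f) x) x



/-! ### Auxiliary lemmas -/

section Aux

lemma circle_eq_iff (x y : ℝ) : (x : UnitAddCircle) = y ↔ ∃ n : ℤ, y = x + n := by
  constructor
  · intro h
    have h2 : ((y - x : ℝ) : AddCircle (1:ℝ)) = 0 := by
      rw [AddCircle.coe_sub, ← h]; simp
    rw [AddCircle.coe_eq_zero_iff] at h2
    obtain ⟨m, hm⟩ := h2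
    exact ⟨m, by simp at hm; linarith⟩
  · rintro ⟨m, rfl⟩
    simp [AddCircle.coe_add]

lemma homeo_coe_mul {X : Type*} [TopologicalSpace X] (f g : X ≃ₜ X) :
    ⇑(f * g) = ⇑f ∘ ⇑g := rfl

lemma homeo_coe_pow {X : Type*} [TopologicalSpace X] (f : X ≃ₜ X) (k : ℕ) :
    ⇑(f ^ k) = (⇑f)^[k] := by
  induction k with
  | zero => rfl
  | succ k ih =>
    rw [pow_succ, homeo_coe_mul, ih, Function.iterate_succ]

lemma IsLift.map_add_int {F : ℝ ≃ₜ ℝ} {f : UnitAddCircle ≃ₜ UnitAddCircle}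
    (h : IsLift F f) (x : ℝ) (m : ℤ) : F (x + m) = F x + m :=
  CircleDeg1Lift.map_add_int (toCircleDeg1Lift F h.1.monotone h.2.1) x m

lemma IsLift.pow {F : ℝ ≃ₜ ℝ} {f : UnitAddCircle ≃ₜ UnitAddCircle}
    (h : IsLift F f) (k : ℕ) : IsLift (F ^ k) (f ^ k) := by
  induction k with
  | zero =>
    refine ⟨fun a b hab => hab, fun x => rfl, fun x => rfl⟩
  | succ k ih =>
    have h1 : ⇑(F ^ (k+1)) = ⇑F ∘ ⇑(F ^ k) := by
      rw [homeo_coe_pow, homeo_coe_pow, Function.iterate_succ']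
    have hF1 : ∀ y, (F ^ (k+1)) y = F ((F ^ k) y) := fun y => congrFun h1 y
    have h2 : ⇑(f ^ (k+1)) = ⇑f ∘ ⇑(f ^ k) := by
      rw [homeo_coe_pow, homeo_coe_pow, Function.iterate_succ']
    have hf1 : ∀ y, (f ^ (k+1)) y = f ((f ^ k) y) := fun y => congrFun h2 y
    refine ⟨?_, fun x => ?_, fun x => ?_⟩
    · rw [h1]; exact h.1.comp ih.1
    · rw [hF1, hF1, ih.2.1, h.2.1]
    · rw [hf1, hF1, ih.2.2, h.2.2]

lemma IsLift.symm {F : ℝ ≃ₜ ℝ} {f : UnitAddCircle ≃ₜ UnitAddCircle}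
    (h : IsLift F f) : IsLift F.symm f⁻¹ := by
  obtain ⟨hFm, hFp, hFl⟩ := h
  refine ⟨fun a b hab => ?_, fun x => ?_, fun x => ?_⟩
  · have h2 : F (F.symm a) < F (F.symm b) := by
      rw [F.apply_symm_apply, F.apply_symm_apply]; exact hab
    exact hFm.lt_iff_lt.mp h2
  · apply F.injective
    rw [F.apply_symm_apply, hFp, F.apply_symm_apply]
  · show f.symm (x : UnitAddCircle) = ((F.symm x : ℝ) : UnitAddCircle)
    have h2 : f ((F.symm x : ℝ) : UnitAddCircle) = ((x : ℝ) : UnitAddCircle) := by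
      rw [hFl, F.apply_symm_apply]
    rw [← h2, f.symm_apply_apply]

lemma lift_unique {F G : ℝ ≃ₜ ℝ} {f : UnitAddCircle ≃ₜ UnitAddCircle}
    (hF : IsLift F f) (hG : IsLift G f) : ∃ c : ℤ, ∀ x, G x = F x + c := by
  have key : ∀ x : ℝ, ∃ m : ℤ, G x = F x + m := by
    intro x
    have h1 : ((F x : ℝ) : UnitAddCircle) = ((G x : ℝ) : UnitAddCircle) := by
      rw [← hF.2.2 x, ← hG.2.2 x]
    exact (circle_eq_iff _ _).mp h1
  obtain ⟨c, hc⟩ := key 0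
  refine ⟨c, fun x => ?_⟩
  by_contra hne
  obtain ⟨m, hm⟩ := key x
  have hmc : m ≠ c := by rintro rfl; exact hne hm
  -- the continuous function G - F takes two distinct integer values, contradiction by IVT
  set d : ℝ → ℝ := fun y => G y - F y with hd
  have hdc : ContinuousOn d (Set.uIcc 0 x) :=
    (G.continuous.sub F.continuous).continuousOn
  have h0 : d 0 = c := by simp [hd, hc]
  have hx : d x = m := by simp [hd, hm]
  have hcm : (1:ℝ) ≤ |(m:ℝ) - c| := by
    have : (1:ℤ) ≤ |m - c| := Int.one_le_abs (sub_ne_zero.mpr hmc)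
    calc (1:ℝ) = ((1:ℤ):ℝ) := by norm_num
      _ ≤ ((|m - c| : ℤ) : ℝ) := by exact_mod_cast this
      _ = |(m:ℝ) - c| := by push_cast; ring
  have hmem : ((c : ℝ) + (if (c:ℝ) < m then 1 else -1)/2) ∈ Set.uIcc (d 0) (d x) := by
    rw [h0, hx]
    rcases abs_cases ((m:ℝ) - c) with ⟨he, _⟩ | ⟨he, _⟩ <;> rw [he] at hcm
    · simp only [if_pos (by linarith : (c:ℝ) < m)]
      exact Set.mem_uIcc.mpr (Or.inl ⟨by linarith, by linarith⟩)
    · simp only [if_neg (by linarith : ¬ (c:ℝ) < m)]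
      exact Set.mem_uIcc.mpr (Or.inr ⟨by linarith, by linarith⟩)
  obtain ⟨y, _, hy⟩ := intermediate_value_uIcc hdc hmem
  obtain ⟨k, hk⟩ := key y
  have hky : (k : ℝ) = (c : ℝ) + (if (c:ℝ) < m then 1 else -1)/2 := by
    have hdy : d y = k := by simp [hd, hk]
    rw [← hdy, hy]
  rcases ite_eq_or_eq ((c:ℝ) < m) (1:ℝ) (-1) with he | he <;> rw [he] at hky
  · have h2 : (2 * k : ℝ) = 2 * c + 1 := by linarith
    have h3 : 2 * k = 2 * c + 1 := by exact_mod_cast h2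
    omega
  · have h2 : (2 * k : ℝ) = 2 * c - 1 := by linarith
    have h3 : 2 * k = 2 * c - 1 := by exact_mod_cast h2
    omega

end Aux

/-! ### Bridge to `CircleDeg1Lift` -/

/-- The `CircleDeg1Lift` associated to a lift. -/
def CD1 {F : ℝ ≃ₜ ℝ} {f : UnitAddCircle ≃ₜ UnitAddCircle} (h : IsLift F f) : CircleDeg1Lift :=
  toCircleDeg1Lift F h.1.monotone h.2.1

lemma CD1_apply {F : ℝ ≃ₜ ℝ} {f : UnitAddCircle ≃ₜ UnitAddCircle} (h : IsLift F f) (x : ℝ) :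
    CD1 h x = F x := rfl

lemma CD1_coe {F : ℝ ≃ₜ ℝ} {f : UnitAddCircle ≃ₜ UnitAddCircle} (h : IsLift F f) :
    ⇑(CD1 h) = ⇑F := rfl

lemma CD1_pow {F : ℝ ≃ₜ ℝ} {f : UnitAddCircle ≃ₜ UnitAddCircle} (h : IsLift F f) (k : ℕ) :
    CD1 (h.pow k) = (CD1 h) ^ k := by
  apply CircleDeg1Lift.ext
  intro x
  rw [CircleDeg1Lift.coe_pow]
  show (F ^ k) x = (⇑F)^[k] x
  rw [homeo_coe_pow]

lemma tnum_shift {F G : ℝ ≃ₜ ℝ} {f g : UnitAddCircle ≃ₜ UnitAddCircle}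
    (hF : IsLift F f) (hG : IsLift G g) (c : ℤ) (hc : ∀ x, G x = F x + c) :
    (CD1 hG).translationNumber = (CD1 hF).translationNumber + c := by
  have he : CD1 hG = ↑(CircleDeg1Lift.translate (Multiplicative.ofAdd (c:ℝ))) * CD1 hF := by
    apply CircleDeg1Lift.ext; intro x
    rw [CircleDeg1Lift.mul_apply, CircleDeg1Lift.translate_apply, CD1_apply, CD1_apply, hc x]
    ring
  have hcomm : Commute (↑(CircleDeg1Lift.translate (Multiplicative.ofAdd (c:ℝ)))) (CD1 hF) := by
    show _ = _
    apply CircleDeg1Lift.ext; intro x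
    rw [CircleDeg1Lift.mul_apply, CircleDeg1Lift.mul_apply, CircleDeg1Lift.translate_apply,
        CircleDeg1Lift.translate_apply, CD1_apply, CD1_apply, add_comm (c:ℝ) x,
        hF.map_add_int x c]
    ring
  rw [he, CircleDeg1Lift.translationNumber_mul_of_commute hcomm,
      CircleDeg1Lift.translationNumber_translate]
  ring

lemma tnum_eq_of_iterate {F : ℝ ≃ₜ ℝ} {f : UnitAddCircle ≃ₜ UnitAddCircle} (h : IsLift F f)
    {m : ℕ} {x : ℝ} {k : ℤ} (hx : (⇑F)^[m] x = x + k) :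
    (m : ℝ) * (CD1 h).translationNumber = k := by
  have h1 : ((CD1 h) ^ m) x = x + k := by
    rw [CircleDeg1Lift.coe_pow, CD1_coe]; exact hx
  rw [← CircleDeg1Lift.translationNumber_pow]
  exact CircleDeg1Lift.translationNumber_of_eq_add_int _ h1

/-- The unit of `CircleDeg1Lift` associated to a lift of a circle homeomorphism. -/
def liftUnit {F : ℝ ≃ₜ ℝ} {f : UnitAddCircle ≃ₜ UnitAddCircle} (h : IsLift F f) :
    CircleDeg1Liftˣ where
  val := CD1 h
  inv := CD1 h.symm
  val_inv := CircleDeg1Lift.ext fun x => by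
    rw [CircleDeg1Lift.mul_apply, CD1_apply, CD1_apply]
    simp [F.apply_symm_apply x]
  inv_val := CircleDeg1Lift.ext fun x => by
    rw [CircleDeg1Lift.mul_apply, CD1_apply, CD1_apply]
    simp [F.symm_apply_apply x]

lemma IsLift.mul {F G : ℝ ≃ₜ ℝ} {f g : UnitAddCircle ≃ₜ UnitAddCircle}
    (hF : IsLift F f) (hG : IsLift G g) : IsLift (G.trans F) (f * g) := by
  refine ⟨hF.1.comp hG.1, fun x => ?_, fun x => ?_⟩
  · show F (G (x + 1)) = F (G x) + 1
    rw [hG.2.1, hF.2.1]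
  · show f (g (x : UnitAddCircle)) = ((F (G x) : ℝ) : UnitAddCircle)
    rw [hG.2.2, hF.2.2]

/-- A lift of `f` commutes with any lift of a power of `f` having translation number zero. -/
lemma lift_commute {F G : ℝ ≃ₜ ℝ} {f : UnitAddCircle ≃ₜ UnitAddCircle} {q : ℕ}
    (hF : IsLift F f) (hG : IsLift G (f ^ q))
    (h0 : (CD1 hG).translationNumber = 0) :
    ∀ x, F (G x) = G (F x) := by
  set K : ℝ ≃ₜ ℝ := F.symm.trans (G.trans F) with hK
  have hKapply : ∀ x, K x = F (G (F.symm x)) := fun x => rfl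
  have hconj : f * (f ^ q) * f⁻¹ = f ^ q := by
    have : Commute f (f ^ q) := (Commute.refl f).pow_right q
    rw [this.eq]
    group
  have hKlift : IsLift K (f ^ q) := by
    have h2 : IsLift K ((f * (f ^ q)) * f⁻¹) := (hF.mul hG).mul hF.symm
    rw [hconj] at h2
    exact h2
  obtain ⟨c, hc⟩ := lift_unique hG hKlift
  have htK : (CD1 hKlift).translationNumber = c := by
    rw [tnum_shift hG hKlift c hc, h0, zero_add]
  have htK0 : (CD1 hKlift).translationNumber = 0 := by
    have hKconj : CD1 hKlift = ↑(liftUnit hF) * CD1 hG * ↑(liftUnit hF)⁻¹ := by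
      apply CircleDeg1Lift.ext; intro x
      rw [CircleDeg1Lift.mul_apply, CircleDeg1Lift.mul_apply]
      rfl
    rw [hKconj, CircleDeg1Lift.translationNumber_conj_eq, h0]
  have hc0 : (c : ℝ) = 0 := by rw [← htK, htK0]
  have hc0' : c = 0 := by exact_mod_cast hc0
  intro x
  have := hc (F x)
  rw [hc0'] at this
  simp only [Int.cast_zero, add_zero] at this
  rw [← this, hKapply, F.symm_apply_apply]

lemma iterate_lt_of_lt {G : ℝ → ℝ} (hG : StrictMono G) {x : ℝ} (h : G x < x) :
    ∀ m, 0 < m → G^[m] x < x := by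
  intro m hm
  induction m with
  | zero => omega
  | succ k ih =>
    rcases Nat.eq_zero_or_pos k with rfl | hk
    · simpa using h
    · rw [Function.iterate_succ_apply']
      exact lt_trans (hG (ih hk)) h

lemma iterate_gt_of_gt {G : ℝ → ℝ} (hG : StrictMono G) {x : ℝ} (h : x < G x) :
    ∀ m, 0 < m → x < G^[m] x := by
  intro m hm
  induction m with
  | zero => omega
  | succ k ih =>
    rcases Nat.eq_zero_or_pos k with rfl | hk
    · simpa using h
    · rw [Function.iterate_succ_apply']
      exact lt_trans h (hG (ih hk))

lemma strictMono_fixed_of_iterate {G : ℝ → ℝ} (hG : StrictMono G) {x : ℝ} {s : ℕ}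
    (hs : 0 < s) (hfix : G^[s] x = x) : G x = x := by
  rcases lt_trichotomy (G x) x with h | h | h
  · exact absurd hfix (ne_of_lt (iterate_lt_of_lt hG h s hs))
  · exact h
  · exact absurd hfix (ne_of_gt (iterate_gt_of_gt hG h s hs))


/-! ### The normalized lift of `f ^ q` -/

lemma coe_sub_int (y : ℝ) (c : ℤ) : ((y - c : ℝ) : UnitAddCircle) = (y : UnitAddCircle) := by
  rw [circle_eq_iff]; exact ⟨c, by ring⟩

/-- The lift `F^q - c` of `f^q`. -/
def Gmap (F : ℝ ≃ₜ ℝ) (q : ℕ) (c : ℤ) : ℝ ≃ₜ ℝ :=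
  (F ^ q).trans (Homeomorph.addRight (-(c:ℝ)))

lemma Gmap_apply (F : ℝ ≃ₜ ℝ) (q : ℕ) (c : ℤ) (x : ℝ) :
    Gmap F q c x = (⇑F)^[q] x - c := by
  show (F ^ q) x + (-(c:ℝ)) = _
  rw [homeo_coe_pow]; ring

lemma Gmap_isLift {F : ℝ ≃ₜ ℝ} {f : UnitAddCircle ≃ₜ UnitAddCircle}
    (hF : IsLift F f) (q : ℕ) (c : ℤ) : IsLift (Gmap F q c) (f ^ q) := by
  have hq := hF.pow q
  refine ⟨fun a b hab => ?_, fun x => ?_, fun x => ?_⟩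
  · have h1 := hq.1 hab
    show (F ^ q) a + (-(c:ℝ)) < (F ^ q) b + (-(c:ℝ))
    linarith
  · show (F ^ q) (x+1) + (-(c:ℝ)) = (F ^ q) x + (-(c:ℝ)) + 1
    rw [hq.2.1]; ring
  · show (f ^ q) _ = _
    rw [hq.2.2 x]
    show _ = ((((F ^ q) x) + -(c:ℝ) : ℝ) : UnitAddCircle)
    rw [← sub_eq_add_neg, coe_sub_int]

lemma Gmap_tnum {F : ℝ ≃ₜ ℝ} {f : UnitAddCircle ≃ₜ UnitAddCircle}
    (hF : IsLift F f) {p q : ℕ} {t : ℤ} (hq : 0 < q)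
    (htau : (CD1 hF).translationNumber = p / q + t) :
    (CD1 (Gmap_isLift hF q (p + q*t))).translationNumber = 0 := by
  have h := tnum_shift (hF.pow q) (Gmap_isLift hF q (p + q*t)) (-((p:ℤ) + q*t)) ?_
  · rw [CD1_pow hF, CircleDeg1Lift.translationNumber_pow, htau] at h
    rw [h]
    have hq' : (q:ℝ) ≠ 0 := Nat.cast_ne_zero.mpr hq.ne'
    push_cast
    field_simp
    ring
  · intro x
    show Gmap F q ((p:ℤ) + q*t) x = (F ^ q) x + ((-((p:ℤ) + (q:ℤ)*t) : ℤ) : ℝ)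
    rw [Gmap_apply, ← homeo_coe_pow]
    push_cast
    ring

lemma Gmap_iterate {F : ℝ ≃ₜ ℝ} {f : UnitAddCircle ≃ₜ UnitAddCircle}
    (hF : IsLift F f) (q : ℕ) (c : ℤ) (j : ℕ) (x : ℝ) :
    (⇑(Gmap F q c))^[j] x = (⇑F)^[q*j] x - j*(c:ℝ) := by
  induction j with
  | zero => simp
  | succ j ih =>
    rw [Function.iterate_succ_apply', ih, Gmap_apply]
    have h2 := (hF.pow q).map_add_int ((⇑F)^[q*j] x) (-((j:ℤ)*c))
    rw [homeo_coe_pow] at h2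
    push_cast at h2
    rw [sub_eq_add_neg ((⇑F)^[q*j] x) ((j:ℝ)*c), h2, ← Function.iterate_add_apply]
    have hqj : q + q*j = q*(j+1) := by ring
    rw [hqj]
    push_cast
    ring

section PeriodicStructure

variable {f : UnitAddCircle ≃ₜ UnitAddCircle} {F : ℝ ≃ₜ ℝ} {p q : ℕ} {t : ℤ}

/-- Any period of a periodic point is divisible by `q`. -/
lemma period_dvd (hF : IsLift F f) (hpq : Nat.Coprime p q) (hq : 0 < q)
    (htau : (CD1 hF).translationNumber = p / q + t)
    (x' : ℝ) (m : ℕ) (hm : 0 < m) (hfix : (⇑f)^[m] (x' : UnitAddCircle) = (x' : UnitAddCircle)) :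
    q ∣ m := by
  have h1 : (f ^ m) (x' : UnitAddCircle) = (((⇑F)^[m] x' : ℝ) : UnitAddCircle) := by
    rw [(hF.pow m).2.2 x', homeo_coe_pow]
  rw [homeo_coe_pow] at h1
  rw [hfix] at h1
  obtain ⟨k, hk⟩ := (circle_eq_iff _ _).mp h1.symm
  have hk' : (⇑F)^[m] x' = x' + ((-k : ℤ) : ℝ) := by push_cast; linarith
  have h2 : (m : ℝ) * (CD1 hF).translationNumber = ((-k : ℤ) : ℝ) := tnum_eq_of_iterate hF hk'
  rw [htau] at h2
  have hq' : (q:ℝ) ≠ 0 := Nat.cast_ne_zero.mpr hq.ne'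
  have h3 : ((m * p : ℤ) : ℝ) = ((q : ℤ) * (-k - m*t) : ℤ) := by
    push_cast at h2 ⊢
    field_simp at h2
    linarith
  have h4 : (m : ℤ) * p = q * (-k - m*t) := by exact_mod_cast h3
  have h5 : (q : ℤ) ∣ (m : ℤ) * p := ⟨-k - m*t, h4⟩
  have hco : IsCoprime (q:ℤ) (p:ℤ) := by
    rw [Int.isCoprime_iff_gcd_eq_one]; exact_mod_cast hpq.symm
  have h6 : (q : ℤ) ∣ (m : ℤ) := hco.dvd_of_dvd_mul_right h5
  exact_mod_cast h6

/-- Every periodic point of `f`, lifted, is a fixed point of the normalized lift of `f^q`. -/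
lemma Gmap_fixed_of_periodic (hF : IsLift F f) (hpq : Nat.Coprime p q) (hq : 0 < q)
    (htau : (CD1 hF).translationNumber = p / q + t)
    (x' : ℝ) (hx : (x' : UnitAddCircle) ∈ periodicPts ⇑f) :
    Gmap F q ((p:ℤ) + q*t) x' = x' := by
  set c : ℤ := (p:ℤ) + q*t with hc
  set m := minimalPeriod ⇑f (x' : UnitAddCircle) with hm
  have hm0 : 0 < m := minimalPeriod_pos_of_mem_periodicPts hx
  have hfix : (⇑f)^[m] (x' : UnitAddCircle) = (x' : UnitAddCircle) :=
    isPeriodicPt_minimalPeriod ⇑f _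
  have hqm : q ∣ m := period_dvd hF hpq hq htau x' m hm0 hfix
  obtain ⟨s, hs⟩ := hqm
  have hs0 : 0 < s := by
    rcases Nat.eq_zero_or_pos s with rfl | h
    · rw [Nat.mul_zero] at hs; omega
    · exact h
  have h1 : (f ^ m) (x' : UnitAddCircle) = (((⇑F)^[m] x' : ℝ) : UnitAddCircle) := by
    rw [(hF.pow m).2.2 x', homeo_coe_pow]
  rw [homeo_coe_pow, hfix] at h1
  obtain ⟨k, hk⟩ := (circle_eq_iff _ _).mp h1.symm
  have hk' : (⇑F)^[m] x' = x' + ((-k : ℤ) : ℝ) := by push_cast; linarith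
  have h2 : (m : ℝ) * (CD1 hF).translationNumber = ((-k : ℤ) : ℝ) := tnum_eq_of_iterate hF hk'
  rw [htau] at h2
  have hq' : (q:ℝ) ≠ 0 := Nat.cast_ne_zero.mpr hq.ne'
  have hkc : ((-k : ℤ) : ℝ) = ((s * c : ℤ) : ℝ) := by
    rw [← h2, hs, hc]
    push_cast
    field_simp
  have hGs : (⇑(Gmap F q c))^[s] x' = x' := by
    rw [Gmap_iterate hF q c s x', ← hs, hk']
    rw [hkc]
    push_cast
    ring
  exact strictMono_fixed_of_iterate (Gmap_isLift hF q c).1 hs0 hGs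

/-- Fixed points of the normalized lift project to periodic points of `f` of period `q`. -/
lemma periodic_of_Gmap_fixed (hF : IsLift F f) (hq : 0 < q) (c : ℤ)
    (x' : ℝ) (hfix : Gmap F q c x' = x') :
    (⇑f)^[q] (x' : UnitAddCircle) = (x' : UnitAddCircle) := by
  have h1 : (⇑F)^[q] x' = x' + c := by
    have := Gmap_apply F q c x'
    rw [hfix] at this
    linarith
  have h2 : (f ^ q) (x' : UnitAddCircle) = (((⇑F)^[q] x' : ℝ) : UnitAddCircle) := by
    rw [(hF.pow q).2.2 x', homeo_coe_pow]
  rw [homeo_coe_pow] at h2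
  rw [h2, h1]
  exact ((circle_eq_iff x' (x' + c)).mpr ⟨c, rfl⟩).symm

/-- Periodic points of `f` have minimal period exactly `q`. -/
lemma minimalPeriod_eq (hF : IsLift F f) (hpq : Nat.Coprime p q) (hq : 0 < q)
    (htau : (CD1 hF).translationNumber = p / q + t)
    (x : UnitAddCircle) (hx : x ∈ periodicPts ⇑f) :
    minimalPeriod ⇑f x = q := by
  obtain ⟨x', rfl⟩ : ∃ y : ℝ, (y : UnitAddCircle) = x := Quot.exists_rep x
  have hdvd1 : q ∣ minimalPeriod ⇑f (x' : UnitAddCircle) :=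
    period_dvd hF hpq hq htau x' _ (minimalPeriod_pos_of_mem_periodicPts hx)
      (isPeriodicPt_minimalPeriod ⇑f _)
  have hfixG : Gmap F q ((p:ℤ) + q*t) x' = x' := Gmap_fixed_of_periodic hF hpq hq htau x' hx
  have hper : IsPeriodicPt ⇑f q (x' : UnitAddCircle) :=
    periodic_of_Gmap_fixed hF hq _ x' hfixG
  exact Nat.dvd_antisymm hper.minimalPeriod_dvd hdvd1

/-- Periodic points of `f` are exactly the projections of fixed points of the
normalized lift. -/
lemma periodic_iff_Gmap_fixed (hF : IsLift F f) (hpq : Nat.Coprime p q) (hq : 0 < q)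
    (htau : (CD1 hF).translationNumber = p / q + t) (x' : ℝ) :
    ((x' : UnitAddCircle) ∈ periodicPts ⇑f ↔ Gmap F q ((p:ℤ) + q*t) x' = x') := by
  constructor
  · intro hx
    exact Gmap_fixed_of_periodic hF hpq hq htau x' hx
  · intro hfix
    exact mem_periodicPts.mpr ⟨q, hq, periodic_of_Gmap_fixed hF hq _ x' hfix⟩

lemma coe_injOn_Ico01 : Set.InjOn (fun y : ℝ => (y : UnitAddCircle)) (Set.Ico 0 1) := by
  haveI : Fact ((0:ℝ) < 1) := ⟨one_pos⟩
  intro a ha b hb hab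
  have ha' : a ∈ Set.Ico (0:ℝ) (0+1) := by rw [zero_add]; exact ha
  have hb' : b ∈ Set.Ico (0:ℝ) (0+1) := by rw [zero_add]; exact hb
  exact (AddCircle.coe_eq_coe_iff_of_mem_Ico ha' hb').mp hab

lemma periodicPts_eq_image (hF : IsLift F f) (hpq : Nat.Coprime p q) (hq : 0 < q)
    (htau : (CD1 hF).translationNumber = p / q + t) :
    periodicPts ⇑f =
      (fun y : ℝ => (y : UnitAddCircle)) '' ({y | Gmap F q ((p:ℤ) + q*t) y = y} ∩ Set.Ico 0 1) := by
  ext x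
  constructor
  · intro hx
    obtain ⟨y, rfl⟩ : ∃ y : ℝ, (y : UnitAddCircle) = x := Quot.exists_rep x
    have hcoe : ((Int.fract y : ℝ) : UnitAddCircle) = (y : UnitAddCircle) := by
      rw [circle_eq_iff]
      exact ⟨⌊y⌋, by rw [← Int.self_sub_floor]; ring⟩
    refine ⟨Int.fract y, ⟨?_, Int.fract_nonneg y, Int.fract_lt_one y⟩, hcoe⟩
    show Gmap F q ((p:ℤ) + q*t) (Int.fract y) = Int.fract y
    exact (periodic_iff_Gmap_fixed hF hpq hq htau (Int.fract y)).mp (by rw [hcoe]; exact hx)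
  · rintro ⟨y, ⟨hyZ, hyI⟩, rfl⟩
    exact (periodic_iff_Gmap_fixed hF hpq hq htau y).mpr hyZ

lemma periodicPts_encard (hF : IsLift F f) (hpq : Nat.Coprime p q) (hq : 0 < q)
    (htau : (CD1 hF).translationNumber = p / q + t) :
    (periodicPts ⇑f).encard = ({y | Gmap F q ((p:ℤ) + q*t) y = y} ∩ Set.Ico 0 1).encard := by
  rw [periodicPts_eq_image hF hpq hq htau]
  exact Set.InjOn.encard_image (coe_injOn_Ico01.mono (Set.inter_subset_right))

end PeriodicStructure

/-! ### Enumeration of a discrete 1-periodic subset of `ℝ` -/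

lemma int_translate_mem {Z : Set ℝ} (hZ1 : ∀ y : ℝ, y ∈ Z ↔ y + 1 ∈ Z) (y : ℝ) (hy : y ∈ Z) :
    ∀ j : ℤ, y + j ∈ Z := by
  intro j
  induction j using Int.induction_on with
  | zero => simpa using hy
  | succ k ih =>
    have h1 := (hZ1 (y + k)).mp ih
    have h2 : y + ((k:ℤ)+1 : ℤ) = y + (k:ℤ) + 1 := by push_cast; ring
    rwa [h2]
  | pred k ih =>
    have h2 : (y + (-(k:ℤ)-1 : ℤ)) + 1 = y + (-(k:ℤ) : ℤ) := by push_cast; ring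
    have h1 := (hZ1 (y + (-(k:ℤ)-1 : ℤ))).mpr (by rwa [h2])
    exact h1

lemma exists_enum (Z : Set ℝ) (n : ℕ) (hn : 0 < n)
    (hZ1 : ∀ y : ℝ, y ∈ Z ↔ y + 1 ∈ Z)
    (hfin : (Z ∩ Set.Ico (0:ℝ) 1).Finite) (hcard : hfin.toFinset.card = n) :
    ∃ z : ℤ → ℝ, StrictMono z ∧ (∀ i, z i ∈ Z) ∧ (∀ i, z (i + n) = z i + 1) ∧
      (∀ y ∈ Z, ∃ i, z i = y) := by
  classical
  set T := hfin.toFinset with hT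
  have hTmem : ∀ y : ℝ, y ∈ T ↔ y ∈ Z ∧ y ∈ Set.Ico (0:ℝ) 1 := by
    intro y; rw [hT, Set.Finite.mem_toFinset]; exact Iff.rfl
  set e := T.orderIsoOfFin hcard with he
  have hn' : (0:ℤ) < n := by exact_mod_cast hn
  have hmod : ∀ i : ℤ, (i % n).toNat < n := by
    intro i
    rw [Int.toNat_lt (Int.emod_nonneg i hn'.ne')]
    exact Int.emod_lt_of_pos i hn'
  set z : ℤ → ℝ := fun i => ((e ⟨(i % n).toNat, hmod i⟩ : ℝ)) + ((i / n : ℤ) : ℝ) with hz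
  have hzval : ∀ (i r d : ℤ) (hr0 : 0 ≤ r) (hrn : r < n), i = n * d + r →
      z i = ((e ⟨r.toNat, by rw [Int.toNat_lt hr0]; exact hrn⟩ : ℝ)) + d := by
    intro i r d hr0 hrn hi
    have h1 : i % n = r := by
      rw [hi, add_comm ((n:ℤ)*d) r, Int.add_mul_emod_self_left, Int.emod_eq_of_lt hr0 hrn]
    have h2 : i / n = d := by
      rw [hi, add_comm ((n:ℤ)*d) r, Int.add_mul_ediv_left _ _ hn'.ne',
        Int.ediv_eq_zero_of_lt hr0 hrn, zero_add]
    rw [hz]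
    simp only
    have hfin1 : (⟨(i % n).toNat, hmod i⟩ : Fin n) =
        ⟨r.toNat, by rw [Int.toNat_lt hr0]; exact hrn⟩ :=
      Fin.ext (show (i % (n:ℤ)).toNat = r.toNat by omega)
    rw [hfin1, h2]
  have hdecomp : ∀ i : ℤ, i = n * (i / n) + (i % n) := fun i => (Int.mul_ediv_add_emod i n).symm
  have hbd : ∀ j : Fin n, (e j : ℝ) ∈ Z ∧ (0:ℝ) ≤ (e j : ℝ) ∧ ((e j : ℝ) < 1) := by
    intro j
    have := (hTmem (e j : ℝ)).mp (e j).2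
    exact ⟨this.1, this.2.1, this.2.2⟩
  have hmem : ∀ i, z i ∈ Z := by
    intro i
    have h1 : ((e ⟨(i % n).toNat, hmod i⟩ : ℝ)) ∈ Z := (hbd _).1
    exact int_translate_mem hZ1 _ h1 (i / n)
  have hshift : ∀ i, z (i + n) = z i + 1 := by
    intro i
    have h1 := hzval i (i % n) (i / n) (Int.emod_nonneg i hn'.ne') (Int.emod_lt_of_pos i hn')
      (hdecomp i)
    have h2 := hzval (i + n) (i % n) (i / n + 1) (Int.emod_nonneg i hn'.ne')
      (Int.emod_lt_of_pos i hn') (by linarith [hdecomp i])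
    rw [h1, h2]
    push_cast
    ring
  have hsm : StrictMono z := by
    apply strictMono_int_of_lt_succ
    intro i
    set r := i % n with hr
    set d := i / n with hd
    have hr0 : 0 ≤ r := Int.emod_nonneg i hn'.ne'
    have hrn : r < n := Int.emod_lt_of_pos i hn'
    have h1 := hzval i r d hr0 hrn (hdecomp i)
    by_cases hc : r + 1 < n
    · have h2 := hzval (i+1) (r+1) d (by omega) hc (by linarith [hdecomp i])
      rw [h1, h2]
      have hlt : (⟨r.toNat, by rw [Int.toNat_lt hr0]; exact hrn⟩ : Fin n) <
          ⟨(r+1).toNat, by rw [Int.toNat_lt (by omega : (0:ℤ) ≤ r+1)]; exact hc⟩ := by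
        rw [Fin.mk_lt_mk]
        omega
      have := e.strictMono hlt
      have hcast : (e ⟨r.toNat, by rw [Int.toNat_lt hr0]; exact hrn⟩ : ℝ) <
          (e ⟨(r+1).toNat, by rw [Int.toNat_lt (by omega : (0:ℤ) ≤ r+1)]; exact hc⟩ : ℝ) := by
        exact_mod_cast this
      linarith
    · have h2 := hzval (i+1) 0 (d+1) le_rfl hn'
        (by
          have hdi := hdecomp i
          rw [← hr, ← hd] at hdi
          have hrn1 : r = n - 1 := by omega
          rw [hdi, hrn1]; ring)
      rw [h1, h2]
      have hb1 := (hbd ⟨r.toNat, by rw [Int.toNat_lt hr0]; exact hrn⟩).2.2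
      have hb2 := (hbd ⟨(0:ℤ).toNat, by rw [Int.toNat_lt le_rfl]; exact hn'⟩).2.1
      simp only [Int.toNat_zero] at h2 hb2
      push_cast
      linarith
  have hsurj : ∀ y ∈ Z, ∃ i, z i = y := by
    intro y hy
    have hwZ : Int.fract y ∈ Z := by
      have := int_translate_mem hZ1 y hy (-⌊y⌋)
      have he2 : y + ((-⌊y⌋ : ℤ) : ℝ) = Int.fract y := by
        rw [← Int.self_sub_floor]
        push_cast
        ring
      rwa [he2] at this
    have hwT : Int.fract y ∈ T := by
      rw [hTmem]
      exact ⟨hwZ, Int.fract_nonneg y, Int.fract_lt_one y⟩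
    obtain ⟨j, hj⟩ := e.surjective ⟨Int.fract y, hwT⟩
    refine ⟨(j:ℤ) + n * ⌊y⌋, ?_⟩
    have h2 := hzval ((j:ℤ) + n * ⌊y⌋) (j:ℤ) ⌊y⌋ (by positivity) (by exact_mod_cast j.2)
      (by ring)
    rw [h2]
    have hfj : (⟨((j:ℤ)).toNat, by rw [Int.toNat_lt (by positivity : (0:ℤ) ≤ (j:ℤ))]; exact_mod_cast j.2⟩ : Fin n) = j := by
      apply Fin.ext
      simp
    rw [hfj, hj]
    show Int.fract y + ((⌊y⌋:ℤ):ℝ) = y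
    rw [← Int.self_sub_floor]
    push_cast
    ring
  exact ⟨z, hsm, hmem, hshift, hsurj⟩

/-! ### The combinatorial core -/

lemma core_comb (n : ℕ) (hn : 0 < n) (ψ : ℝ → ℝ) (hψc : Continuous ψ)
    (z : ℤ → ℝ) (hsm : StrictMono z)
    (hzero : ∀ i, ψ (z i) = 0)
    (hsurj : ∀ y, ψ y = 0 → ∃ i, z i = y)
    (hzn : ∀ i, z (i + n) = z i + 1)
    (hψ1 : ∀ y, ψ (y + 1) = ψ y)
    (hcross : ∀ i, ∀ ε > (0:ℝ), (∃ y₁ ∈ Set.Ioo (z i - ε) (z i + ε), ψ y₁ < 0) ∧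
        (∃ y₂ ∈ Set.Ioo (z i - ε) (z i + ε), 0 < ψ y₂))
    (Φ : ℝ → ℝ) (hΦm : StrictMono Φ) (hΦs : Function.Surjective Φ)
    (hΦz : ∀ y, ψ y = 0 → ψ (Φ y) = 0)
    (hΦz' : ∀ y, ψ (Φ y) = 0 → ψ y = 0)
    (hΦsgn : ∀ y, 0 < ψ (Φ y) ↔ 0 < ψ y) :
    Even (n : ℤ) ∧ ∃ d : ℤ, Even d ∧ ∀ i, Φ (z i) = z (i + d) := by
  classical
  -- no zeros inside gaps
  have hgap : ∀ (i : ℤ) (y : ℝ), z i < y → y < z (i+1) → ψ y ≠ 0 := by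
    intro i y h1 h2 h0
    obtain ⟨j, rfl⟩ := hsurj y h0
    have hj1 : i < j := hsm.lt_iff_lt.mp h1
    have hj2 : j < i + 1 := hsm.lt_iff_lt.mp h2
    omega
  -- constant sign on gaps
  have hsc : ∀ (i : ℤ) (a b : ℝ), a ∈ Set.Ioo (z i) (z (i+1)) → b ∈ Set.Ioo (z i) (z (i+1)) →
      (0 < ψ a ↔ 0 < ψ b) := by
    have key : ∀ (i : ℤ) (a b : ℝ), a ∈ Set.Ioo (z i) (z (i+1)) → b ∈ Set.Ioo (z i) (z (i+1)) →
        0 < ψ a → 0 < ψ b := by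
      intro i a b ha hb hpa
      by_contra hpb
      push_neg at hpb
      have h0 : (0:ℝ) ∈ Set.uIcc (ψ a) (ψ b) := Set.mem_uIcc.mpr (Or.inr ⟨hpb, le_of_lt hpa⟩)
      obtain ⟨y, hy1, hy2⟩ := intermediate_value_uIcc (hψc.continuousOn) h0
      have hymem : y ∈ Set.Ioo (z i) (z (i+1)) :=
        Set.OrdConnected.uIcc_subset Set.ordConnected_Ioo ha hb hy1
      exact hgap i y hymem.1 hymem.2 hy2
    intro i a b ha hb
    exact ⟨fun h => key i a b ha hb h, fun h => key i b a hb ha h⟩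
  set mid : ℤ → ℝ := fun i => (z i + z (i+1))/2 with hmid
  have hmidmem : ∀ i, mid i ∈ Set.Ioo (z i) (z (i+1)) := by
    intro i
    have := hsm (lt_add_one i)
    constructor <;> (simp only [hmid]; nlinarith)
  set s : ℤ → Prop := fun i => 0 < ψ (mid i) with hs
  -- alternation
  have halt : ∀ i, s (i+1) ↔ ¬ s i := by
    intro i
    have hz1 : z i < z (i+1) := hsm (lt_add_one i)
    have hz2 : z (i+1) < z (i+1+1) := hsm (lt_add_one (i+1))
    set ε : ℝ := min (z (i+1) - z i) (z (i+1+1) - z (i+1)) with hε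
    have hε0 : 0 < ε := lt_min (by linarith) (by linarith)
    obtain ⟨⟨y₁, hy₁m, hy₁⟩, ⟨y₂, hy₂m, hy₂⟩⟩ := hcross (i+1) ε hε0
    have hloc : ∀ y ∈ Set.Ioo (z (i+1) - ε) (z (i+1) + ε), ψ y ≠ 0 →
        y ∈ Set.Ioo (z i) (z (i+1)) ∨ y ∈ Set.Ioo (z (i+1)) (z (i+1+1)) := by
      intro y hym hyne
      have hb1 : z i ≤ z (i+1) - ε := by
        have := min_le_left (z (i+1) - z i) (z (i+1+1) - z (i+1))
        rw [← hε] at this; linarith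
      have hb2 : z (i+1) + ε ≤ z (i+1+1) := by
        have := min_le_right (z (i+1) - z i) (z (i+1+1) - z (i+1))
        rw [← hε] at this; linarith
      rcases lt_trichotomy y (z (i+1)) with h | h | h
      · exact Or.inl ⟨lt_of_le_of_lt hb1 hym.1, h⟩
      · exact absurd (h ▸ hzero (i+1)) hyne
      · exact Or.inr ⟨h, lt_of_lt_of_le hym.2 hb2⟩
    have hy₁loc := hloc y₁ hy₁m (ne_of_lt hy₁)
    have hy₂loc := hloc y₂ hy₂m (ne_of_gt hy₂)
    constructor
    · intro hsi1 hsi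
      rcases hy₁loc with h | h
      · exact absurd ((hsc i _ _ h (hmidmem i)).mpr hsi) (by linarith)
      · exact absurd ((hsc (i+1) _ _ h (hmidmem (i+1))).mpr hsi1) (by linarith)
    · intro hnsi
      rcases hy₂loc with h | h
      · exact absurd ((hsc i _ _ (hmidmem i) h).mpr hy₂) hnsi
      · exact (hsc (i+1) _ _ (hmidmem (i+1)) h).mpr hy₂
  have hparity : ∀ i : ℤ, s i ↔ (Even i ↔ s 0) := by
    intro i
    induction i using Int.induction_on with
    | zero => simp
    | succ k ih =>
      have h1 := halt k
      have h2 : Even ((k:ℤ)+1) ↔ ¬ Even (k:ℤ) := Int.even_add_one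
      tauto
    | pred k ih =>
      have h1 := halt (-(k:ℤ)-1)
      have hind : -(k:ℤ)-1+1 = -(k:ℤ) := by ring
      rw [hind] at h1
      have h2 : Even (-(k:ℤ)) ↔ ¬ Even (-(k:ℤ)-1) := by
        rw [Int.even_iff, Int.even_iff]; omega
      tauto
  have hshiftEven : ∀ d : ℤ, (∀ i, s (i + d) ↔ s i) → Even d := by
    intro d hd
    have h1 := hd 0
    rw [zero_add] at h1
    have h2 := hparity d
    by_cases h0 : s 0 <;> tauto
  -- n is even
  have hNeven : Even (n:ℤ) := by
    apply hshiftEven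
    intro i
    have hm : mid (i + n) = mid i + 1 := by
      have e1 : z (i + n) = z i + 1 := hzn i
      have e2 : z (i + n + 1) = z (i+1) + 1 := by
        have := hzn (i+1)
        have he : i + 1 + (n:ℤ) = i + n + 1 := by ring
        rwa [he] at this
      simp only [hmid]
      rw [e1, e2]
      ring
    simp only [hs]
    rw [hm, hψ1]
  -- the index shift
  have hπ : ∀ i : ℤ, ∃ j : ℤ, Φ (z i) = z j := by
    intro i
    obtain ⟨j, hj⟩ := hsurj (Φ (z i)) (hΦz _ (hzero i))
    exact ⟨j, hj.symm⟩
  choose π hπ' using hπ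
  have hπsucc : ∀ i, π (i+1) = π i + 1 := by
    intro i
    have h1 : z (π i) < z (π (i+1)) := by
      rw [← hπ' i, ← hπ' (i+1)]
      exact hΦm (hsm (lt_add_one i))
    have h2 : π i < π (i+1) := hsm.lt_iff_lt.mp h1
    by_contra hne
    have h3 : π i + 1 < π (i+1) := by omega
    -- z (π i + 1) is a zero strictly between Φ (z i) and Φ (z (i+1))
    obtain ⟨y, hy⟩ := hΦs (z (π i + 1))
    have hlt1 : Φ (z i) < Φ y := by rw [hπ' i, hy]; exact hsm (by omega)
    have hlt2 : Φ y < Φ (z (i+1)) := by rw [hπ' (i+1), hy]; exact hsm h3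
    have hy1 : z i < y := hΦm.lt_iff_lt.mp hlt1
    have hy2 : y < z (i+1) := hΦm.lt_iff_lt.mp hlt2
    have hyz : ψ y = 0 := hΦz' y (by rw [hy]; exact hzero _)
    exact hgap i y hy1 hy2 hyz
  have hπlin : ∀ i, π i = π 0 + i := by
    intro i
    induction i using Int.induction_on with
    | zero => simp
    | succ k ih => rw [hπsucc k, ih]; ring
    | pred k ih =>
      have := hπsucc (-(k:ℤ)-1)
      have hind : -(k:ℤ)-1+1 = -(k:ℤ) := by ring
      rw [hind] at this
      rw [ih] at this
      omega
  set d : ℤ := π 0 with hd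
  have hΦzd : ∀ i, Φ (z i) = z (i + d) := by
    intro i
    rw [hπ' i, hπlin i, add_comm d i]
  have hs_shift : ∀ i, s (i + d) ↔ s i := by
    intro i
    have hmem : Φ (mid i) ∈ Set.Ioo (z (i+d)) (z (i+d+1)) := by
      constructor
      · rw [← hΦzd i]
        exact hΦm (hmidmem i).1
      · have he : i + d + 1 = (i+1) + d := by ring
        rw [he, ← hΦzd (i+1)]
        exact hΦm (hmidmem i).2
    have h1 : (0 < ψ (mid (i+d))) ↔ (0 < ψ (Φ (mid i))) :=
      hsc (i+d) _ _ (hmidmem (i+d)) hmem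
    simp only [hs]
    rw [h1, hΦsgn]
  exact ⟨hNeven, d, hshiftEven d hs_shift, hΦzd⟩

/-! ### Constructing a circle homeomorphism from a lift -/

lemma add_int_of_add_one {F : ℝ → ℝ} (h1 : ∀ x, F (x+1) = F x + 1) (x : ℝ) (m : ℤ) :
    F (x + m) = F x + m := by
  induction m using Int.induction_on with
  | zero => simp
  | succ k ih =>
    have e1 : x + ((k:ℤ)+1 : ℤ) = (x + (k:ℤ)) + 1 := by push_cast; ring
    rw [e1, h1, ih]
    push_cast
    ring
  | pred k ih =>
    have e1 : x + (-(k:ℤ) : ℤ) = (x + (-(k:ℤ)-1 : ℤ)) + 1 := by push_cast; ring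
    rw [e1, h1] at ih
    have : F (x + (-(k:ℤ)-1 : ℤ)) = F x + (-(k:ℤ)-1 : ℤ) → _ := id
    push_cast at ih ⊢
    linarith

lemma symm_add_one {F : ℝ ≃ₜ ℝ} (h1 : ∀ x, F (x+1) = F x + 1) (x : ℝ) :
    F.symm (x + 1) = F.symm x + 1 := by
  apply F.injective
  rw [F.apply_symm_apply, h1, F.apply_symm_apply]

private lemma descend_aux {F : ℝ → ℝ} (h1 : ∀ x, F (x+1) = F x + 1) :
    ∀ a b : ℝ, (QuotientAddGroup.leftRel (AddSubgroup.zmultiples (1:ℝ))) a b →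
      (QuotientAddGroup.leftRel (AddSubgroup.zmultiples (1:ℝ))) (F a) (F b) := by
  intro a b hab
  rw [QuotientAddGroup.leftRel_apply] at hab ⊢
  obtain ⟨m, hm⟩ := AddSubgroup.mem_zmultiples_iff.mp hab
  simp only [zsmul_eq_mul, mul_one] at hm
  have hb : b = a + m := by linarith
  rw [hb, add_int_of_add_one h1 a m]
  apply AddSubgroup.mem_zmultiples_iff.mpr
  exact ⟨m, by simp⟩

/-- Descend a lift to a circle homeomorphism. -/
noncomputable def mkCircleHomeo (F : ℝ ≃ₜ ℝ) (h1 : ∀ x, F (x+1) = F x + 1) :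
    UnitAddCircle ≃ₜ UnitAddCircle where
  toFun := Quotient.map' F (descend_aux h1)
  invFun := Quotient.map' F.symm (descend_aux (symm_add_one h1))
  left_inv := by
    intro x
    induction x using QuotientAddGroup.induction_on with
    | H z =>
      show ((F.symm (F z) : ℝ) : UnitAddCircle) = ((z : ℝ) : UnitAddCircle)
      rw [F.symm_apply_apply]
  right_inv := by
    intro x
    induction x using QuotientAddGroup.induction_on with
    | H z =>
      show ((F (F.symm z) : ℝ) : UnitAddCircle) = ((z : ℝ) : UnitAddCircle)
      rw [F.apply_symm_apply]
  continuous_toFun := continuous_coinduced_dom.mpr (continuous_quotient_mk'.comp F.continuous)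
  continuous_invFun := continuous_coinduced_dom.mpr (continuous_quotient_mk'.comp F.symm.continuous)

lemma mkCircleHomeo_isLift (F : ℝ ≃ₜ ℝ) (hm : StrictMono F) (h1 : ∀ x, F (x+1) = F x + 1) :
    IsLift F (mkCircleHomeo F h1) :=
  ⟨hm, h1, fun _ => rfl⟩

/-! ### The model construction -/

noncomputable def G0 (n : ℕ) : ℝ → ℝ :=
  fun x => x + Real.sin (Real.pi * n * x) / (2 * Real.pi * n)

lemma G0_hasDeriv (n : ℕ) (hn : 0 < n) (x : ℝ) :
    HasDerivAt (G0 n) (1 + Real.cos (Real.pi * n * x) / 2) x := by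
  have hπ : (0:ℝ) < Real.pi := Real.pi_pos
  have hn' : (0:ℝ) < n := by exact_mod_cast hn
  have h1 : HasDerivAt (fun y : ℝ => Real.pi * n * y) (Real.pi * n) x := by
    simpa using (hasDerivAt_id x).const_mul (Real.pi * n)
  have h2 : HasDerivAt (fun y => Real.sin (Real.pi * n * y))
      (Real.cos (Real.pi * n * x) * (Real.pi * n)) x :=
    (Real.hasDerivAt_sin (Real.pi * n * x)).comp x h1
  have h3 := h2.div_const (2 * Real.pi * n)
  have h4 := (hasDerivAt_id x).add h3
  exact h4.congr_deriv (by field_simp <;> ring)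

lemma G0_strictMono (n : ℕ) (hn : 0 < n) : StrictMono (G0 n) := by
  apply strictMono_of_deriv_pos
  intro x
  rw [(G0_hasDeriv n hn x).deriv]
  have := Real.neg_one_le_cos (Real.pi * n * x)
  linarith

lemma G0_continuous (n : ℕ) : Continuous (G0 n) := by
  apply continuous_id.add
  apply Continuous.div_const
  exact Real.continuous_sin.comp (continuous_const.mul continuous_id)

lemma G0_bounds (n : ℕ) (hn : 0 < n) (x : ℝ) : x - 1 ≤ G0 n x ∧ G0 n x ≤ x + 1 := by
  have hπ : (0:ℝ) < Real.pi := Real.pi_pos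
  have hn' : (1:ℝ) ≤ n := by exact_mod_cast hn
  have hd0 : (1:ℝ) ≤ 2 * Real.pi * n := by nlinarith [Real.pi_gt_three]
  have hs1 := Real.neg_one_le_sin (Real.pi * n * x)
  have hs2 := Real.sin_le_one (Real.pi * n * x)
  constructor
  · have : -1 ≤ Real.sin (Real.pi * n * x) / (2 * Real.pi * n) := by
      rw [le_div_iff₀ (by linarith : (0:ℝ) < 2 * Real.pi * n)]
      nlinarith
    simp only [G0]
    linarith
  · have : Real.sin (Real.pi * n * x) / (2 * Real.pi * n) ≤ 1 := by
      rw [div_le_iff₀ (by linarith : (0:ℝ) < 2 * Real.pi * n)]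
      nlinarith
    simp only [G0]
    linarith

lemma G0_surjective (n : ℕ) (hn : 0 < n) : Function.Surjective (G0 n) := by
  apply (G0_continuous n).surjective
  · apply Filter.tendsto_atTop_mono (fun x => (G0_bounds n hn x).1)
    exact (Filter.tendsto_atTop_add_const_right _ (-1) Filter.tendsto_id).congr
      (fun x => by simp [sub_eq_add_neg])
  · apply Filter.tendsto_atBot_mono (fun x => (G0_bounds n hn x).2)
    exact (Filter.tendsto_atBot_add_const_right _ 1 Filter.tendsto_id).congr
      (fun x => by simp)

noncomputable def G0homeo (n : ℕ) (hn : 0 < n) : ℝ ≃ₜ ℝ :=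
  (StrictMono.orderIsoOfSurjective _ (G0_strictMono n hn) (G0_surjective n hn)).toHomeomorph

lemma G0homeo_apply (n : ℕ) (hn : 0 < n) (x : ℝ) : G0homeo n hn x = G0 n x := rfl

lemma G0_zero (n : ℕ) : G0 n 0 = 0 := by
  simp [G0]

lemma G0_shift (n : ℕ) (x r : ℝ) (m : ℤ) (hm : Even m) (hr : Real.pi * n * r = m * Real.pi) :
    G0 n (x + r) = G0 n x + r := by
  have h1 : Real.pi * n * (x + r) = Real.pi * n * x + m * Real.pi := by rw [← hr]; ring
  simp only [G0]
  rw [h1, Real.sin_add_int_mul_pi, hm.neg_one_zpow, one_mul]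
  ring

/-! ### Arithmetic endgame -/

lemma arith_end (q n : ℕ) (c d : ℤ) (hq : 0 < q) (h : (q:ℤ)*d = (n:ℤ)*c)
    (hco : IsCoprime (q:ℤ) c) (hd : Even d) (hne : Even (n:ℤ)) :
    q ∣ n ∧ Even (n / q) := by
  have h1 : (q:ℤ) ∣ (n:ℤ)*c := ⟨d, h.symm⟩
  have h2 : (q:ℤ) ∣ (n:ℤ) := hco.dvd_of_dvd_mul_right h1
  have h3 : q ∣ n := by exact_mod_cast h2
  obtain ⟨k, hk⟩ := h3
  refine ⟨⟨k, hk⟩, ?_⟩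
  have hnq : n / q = k := by rw [hk]; exact Nat.mul_div_cancel_left k hq
  rw [hnq]
  have hq0 : (q:ℤ) ≠ 0 := by exact_mod_cast hq.ne'
  have hdkc : d = (k:ℤ) * c := by
    have h4 : (q:ℤ) * d = (q:ℤ) * ((k:ℤ)*c) := by rw [h, hk]; push_cast; ring
    exact mul_left_cancel₀ hq0 h4
  by_contra hko
  have hkodd : ¬ Even (k:ℤ) := by rwa [Int.even_coe_nat]
  have hceven : Even c := by
    rcases Int.even_mul.mp (hdkc ▸ hd) with h | h
    · exact absurd h hkodd
    · exact h
  have hqodd : ¬ Even (q:ℤ) := by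
    intro hqe
    have hu : IsUnit (2:ℤ) := hco.isUnit_of_dvd' hqe.two_dvd hceven.two_dvd
    rw [Int.isUnit_iff] at hu
    omega
  have hqk : Even ((q:ℤ) * (k:ℤ)) := by
    rw [← Nat.cast_mul, ← hk]; exact hne
  rcases Int.even_mul.mp hqk with h | h
  · exact hqodd h
  · exact hkodd h

/-! ### The forward direction -/

lemma forward_main (p q n : ℕ) (hpq : Nat.Coprime p q) (hp : p < q) (hn : 0 < n)
    (f : UnitAddCircle ≃ₜ UnitAddCircle) (F : ℝ ≃ₜ ℝ) (hF : IsLift F f) (t : ℤ)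
    (htau : (CD1 hF).translationNumber = p / q + t)
    (hcard : (periodicPts ⇑f).encard = (n : ℕ∞))
    (hcross : ∀ x ∈ periodicPts ⇑f, IsCrossingPeriodicPt f x) :
    q ∣ n ∧ Even (n / q) := by
  classical
  have hq : 0 < q := lt_of_le_of_lt (Nat.zero_le p) hp
  set c : ℤ := (p:ℤ) + q*t with hc
  set G : ℝ ≃ₜ ℝ := Gmap F q c with hGdef
  have hGlift : IsLift G (f ^ q) := Gmap_isLift hF q c
  have hGtnum : (CD1 hGlift).translationNumber = 0 := Gmap_tnum hF hq htau
  -- periodic points are exactly the fixed points of G (projected)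
  have hPZ : ∀ x' : ℝ, ((x' : UnitAddCircle) ∈ periodicPts ⇑f ↔ G x' = x') := by
    intro x'
    constructor
    · intro hx
      exact Gmap_fixed_of_periodic hF hpq hq htau x' hx
    · intro hfix
      exact mem_periodicPts.mpr ⟨q, hq, periodic_of_Gmap_fixed hF hq c x' hfix⟩
  set Zset : Set ℝ := {y | G y = y} with hZdef
  have hZ1 : ∀ y : ℝ, y ∈ Zset ↔ y + 1 ∈ Zset := by
    intro y
    simp only [hZdef, Set.mem_setOf_eq]
    constructor
    · intro hy; rw [hGlift.2.1, hy]
    · intro hy; have := hGlift.2.1 y; rw [hy] at this; linarith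
  -- the image of the fundamental-domain zeros is the set of periodic points
  have himg : periodicPts ⇑f = (fun y : ℝ => (y : UnitAddCircle)) '' (Zset ∩ Set.Ico 0 1) := by
    ext x
    constructor
    · intro hx
      obtain ⟨y, rfl⟩ : ∃ y : ℝ, (y : UnitAddCircle) = x := Quot.exists_rep x
      refine ⟨Int.fract y, ⟨?_, Int.fract_nonneg y, Int.fract_lt_one y⟩, ?_⟩
      · have hcoe : ((Int.fract y : ℝ) : UnitAddCircle) = (y : UnitAddCircle) := by
          rw [circle_eq_iff]
          exact ⟨⌊y⌋, by rw [← Int.self_sub_floor]; ring⟩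
        rw [hZdef]
        show G (Int.fract y) = Int.fract y
        exact (hPZ (Int.fract y)).mp (by rw [hcoe]; exact hx)
      · show ((Int.fract y : ℝ) : UnitAddCircle) = (y : UnitAddCircle)
        rw [circle_eq_iff]
        exact ⟨⌊y⌋, by rw [← Int.self_sub_floor]; ring⟩
    · rintro ⟨y, ⟨hyZ, hyI⟩, rfl⟩
      exact (hPZ y).mpr hyZ
  haveI : Fact ((0:ℝ) < 1) := ⟨one_pos⟩
  have hinj : Set.InjOn (fun y : ℝ => (y : UnitAddCircle)) (Zset ∩ Set.Ico 0 1) := by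
    intro a ha b hb hab
    have ha' : a ∈ Set.Ico (0:ℝ) (0+1) := by rw [zero_add]; exact ha.2
    have hb' : b ∈ Set.Ico (0:ℝ) (0+1) := by rw [zero_add]; exact hb.2
    exact (AddCircle.coe_eq_coe_iff_of_mem_Ico ha' hb').mp hab
  have hencard : (Zset ∩ Set.Ico (0:ℝ) 1).encard = (n : ℕ∞) := by
    rw [← hinj.encard_image, ← himg, hcard]
  have hfin : (Zset ∩ Set.Ico (0:ℝ) 1).Finite := Set.finite_of_encard_eq_coe hencard
  have hcard' : hfin.toFinset.card = n := by
    have := hfin.encard_eq_coe_toFinset_card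
    rw [hencard] at this
    exact_mod_cast this.symm
  obtain ⟨z, hsm, hmem, hzn, hsurj⟩ := exists_enum Zset n hn hZ1 hfin hcard'
  set ψ : ℝ → ℝ := fun y => G y - y with hψdef
  have hψc : Continuous ψ := G.continuous.sub continuous_id
  have hψz : ∀ y, ψ y = 0 ↔ y ∈ Zset := by
    intro y
    simp only [hψdef, hZdef, Set.mem_setOf_eq, sub_eq_zero]
  have hcomm : ∀ x, F (G x) = G (F x) := lift_commute hF hGlift hGtnum
  -- crossing property in terms of ψ
  have hcrossψ : ∀ i : ℤ, ∀ ε > (0:ℝ), (∃ y₁ ∈ Set.Ioo (z i - ε) (z i + ε), ψ y₁ < 0) ∧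
      (∃ y₂ ∈ Set.Ioo (z i - ε) (z i + ε), 0 < ψ y₂) := by
    intro i ε hε
    have hxS : ((z i : ℝ) : UnitAddCircle) ∈ periodicPts ⇑f := (hPZ (z i)).mpr (hmem i)
    have hcr := hcross _ hxS
    rw [IsCrossingPeriodicPt, minimalPeriod_eq hF hpq hq htau _ hxS] at hcr
    have hG0 : G (z i) = z i + ((0:ℤ):ℝ) := by
      rw [Int.cast_zero, add_zero]; exact hmem i
    obtain ⟨⟨y₁, hy₁m, hy₁⟩, ⟨y₂, hy₂m, hy₂⟩⟩ := hcr G hGlift (z i) rfl 0 hG0 ε hε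
    rw [Int.cast_zero, add_zero] at hy₁ hy₂
    exact ⟨⟨y₁, hy₁m, by simp only [hψdef]; linarith⟩,
           ⟨y₂, hy₂m, by simp only [hψdef]; linarith⟩⟩
  -- apply the combinatorial core
  obtain ⟨hNeven, d, hdeven, hΦzd⟩ :=
    core_comb n hn ψ hψc z hsm
      (fun i => (hψz _).mpr (hmem i))
      (fun y hy => hsurj y ((hψz y).mp hy))
      hzn
      (fun y => by
        simp only [hψdef]
        rw [hGlift.2.1]
        ring)
      hcrossψ
      (⇑F) hF.1 F.surjective
      (fun y hy => by
        rw [hψz] at hy ⊢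
        show G (F y) = F y
        rw [← hcomm, hy])
      (fun y hy => by
        rw [hψz] at hy ⊢
        have : F (G y) = F y := by rw [hcomm]; exact hy
        exact F.injective this)
      (fun y => by
        simp only [hψdef]
        rw [← hcomm]
        constructor
        · intro h
          have : F y < F (G y) := by linarith
          have := hF.1.lt_iff_lt.mp this
          linarith
        · intro h
          have : y < G y := by linarith
          have := hF.1 this
          linarith)
  -- iterate the index shift
  have hFiter : ∀ (j : ℕ) (i : ℤ), (⇑F)^[j] (z i) = z (i + j*d) := by
    intro j
    induction j with
    | zero => intro i; simp
    | succ j ih =>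
      intro i
      rw [Function.iterate_succ_apply', ih, hΦzd]
      congr 1
      push_cast
      ring
  have hznj : ∀ (i j : ℤ), z (i + n*j) = z i + j := by
    intro i j
    induction j using Int.induction_on with
    | zero => simp
    | succ k ih =>
      have h1 : i + (n:ℤ)*((k:ℤ)+1) = (i + n*k) + n := by ring
      rw [h1, hzn, ih]
      push_cast
      ring
    | pred k ih =>
      have h1 : i + (n:ℤ)*(-(k:ℤ)-1) + n = i + n*(-(k:ℤ)) := by ring
      have h2 := hzn (i + (n:ℤ)*(-(k:ℤ)-1))
      rw [h1, ih] at h2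
      push_cast at h2 ⊢
      linarith
  -- compute: F^[q] (z 0) = z 0 + c
  have hq1 : (⇑F)^[q] (z 0) = z 0 + c := by
    have h1 : G (z 0) = z 0 := hmem 0
    rw [hGdef, Gmap_apply] at h1
    linarith
  have hkey : (q:ℤ)*d = (n:ℤ)*c := by
    have h1 : z (0 + (q:ℤ)*d) = z (0 + (n:ℤ)*c) := by
      rw [← hFiter q 0, hq1, hznj 0 c]
    have := hsm.injective h1
    omega
  have hco : IsCoprime (q:ℤ) c := by
    have h1 : IsCoprime (q:ℤ) (p:ℤ) := by
      rw [Int.isCoprime_iff_gcd_eq_one]; exact_mod_cast hpq.symm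
    rw [hc]
    exact h1.add_mul_left_right t
  exact arith_end q n c d hq hkey hco hdeven hNeven

/-! ### The backward direction -/

lemma backward_main (p q k : ℕ) (hpq : Nat.Coprime p q) (hp : p < q) (hk : 0 < k)
    (hke : Even k) :
    ∃ f : UnitAddCircle ≃ₜ UnitAddCircle, (∃ F : ℝ ≃ₜ ℝ, IsLift F f) ∧
      HasRotationNumber f ((((p : ℝ) / (q : ℝ)) : UnitAddCircle)) ∧
      (periodicPts ⇑f).encard = ((q * k : ℕ) : ℕ∞) ∧
      ∀ x ∈ periodicPts ⇑f, IsCrossingPeriodicPt f x := by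
  classical
  have hq : 0 < q := lt_of_le_of_lt (Nat.zero_le p) hp
  set n : ℕ := q * k with hn_def
  have hn : 0 < n := Nat.mul_pos hq hk
  have hne : Even n := hke.mul_left q
  have hπ : (0:ℝ) < Real.pi := Real.pi_pos
  have hq' : ((q:ℝ)) ≠ 0 := Nat.cast_ne_zero.mpr hq.ne'
  have hn' : ((n:ℝ)) ≠ 0 := Nat.cast_ne_zero.mpr hn.ne'
  have hnqk : (n:ℝ) = (q:ℝ) * k := by rw [hn_def]; push_cast; ring
  set F : ℝ ≃ₜ ℝ := (G0homeo n hn).trans (Homeomorph.addRight ((p:ℝ)/q)) with hFdef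
  have hFapp : ∀ x, F x = G0 n x + (p:ℝ)/q := fun _ => rfl
  have hshift1 : ∀ x, F (x + 1) = F x + 1 := by
    intro x
    rw [hFapp, hFapp, G0_shift n x 1 (n:ℤ) (by exact_mod_cast hne) (by push_cast; ring)]
    ring
  have hFmono : StrictMono ⇑F := by
    intro a b hab
    rw [hFapp, hFapp]
    have := G0_strictMono n hn hab
    linarith
  set f := mkCircleHomeo F hshift1 with hfdef
  have hF : IsLift F f := mkCircleHomeo_isLift F hFmono hshift1
  -- iterates of F
  have hGpq : ∀ (x : ℝ) (j : ℕ), G0 n (x + j*((p:ℝ)/q)) = G0 n x + j*((p:ℝ)/q) := by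
    intro x j
    apply G0_shift n x _ ((k*p*j : ℕ) : ℤ)
    · rw [Int.even_coe_nat]
      exact (hke.mul_right p).mul_right j
    · push_cast
      rw [hnqk]
      field_simp
  have hFiter : ∀ (j : ℕ) (x : ℝ), (⇑F)^[j] x = (G0 n)^[j] x + j*((p:ℝ)/q) := by
    intro j
    induction j with
    | zero => intro x; simp
    | succ j ih =>
      intro x
      rw [Function.iterate_succ_apply', ih x, hFapp, hGpq, Function.iterate_succ_apply']
      push_cast
      ring
  -- translation number
  have hq_tau : (⇑F)^[q] 0 = 0 + ((p:ℤ):ℝ) := by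
    rw [hFiter q 0, Function.iterate_fixed (G0_zero n) q]
    push_cast
    field_simp
  have htau : (CD1 hF).translationNumber = p / q + ((0:ℤ):ℝ) := by
    have h1 : (q:ℝ) * (CD1 hF).translationNumber = ((p:ℤ):ℝ) := tnum_eq_of_iterate hF hq_tau
    push_cast at h1 ⊢
    field_simp at h1 ⊢
    linarith
  -- fixed points of the normalized lift
  have hGmap_eq : ∀ y, Gmap F q ((p:ℤ) + q*0) y = (G0 n)^[q] y := by
    intro y
    rw [Gmap_apply, hFiter q y]
    have h2 : (q:ℝ)*((p:ℝ)/q) = p := by field_simp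
    push_cast
    linarith
  have hfix_iff : ∀ y, Gmap F q ((p:ℤ) + q*0) y = y ↔ Real.sin (Real.pi * n * y) = 0 := by
    intro y
    rw [hGmap_eq]
    constructor
    · intro h
      have h1 : G0 n y = y := strictMono_fixed_of_iterate (G0_strictMono n hn) hq h
      have h2 : Real.sin (Real.pi * n * y)/(2 * Real.pi * n) = 0 := by
        simp only [G0] at h1; linarith
      rcases div_eq_zero_iff.mp h2 with h3 | h3
      · exact h3
      · exact absurd h3 (by positivity)
    · intro h
      have h1 : G0 n y = y := by simp only [G0]; rw [h]; simp
      exact Function.iterate_fixed h1 q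
  -- rotation number
  have hrot : HasRotationNumber f ((((p:ℝ)/(q:ℝ)) : UnitAddCircle)) := by
    refine ⟨F, hF, ?_⟩
    show (((CD1 hF).translationNumber : ℝ) : UnitAddCircle) = _
    rw [htau]
    norm_num
  -- cardinality of periodic points
  have hZIco : {y | Gmap F q ((p:ℤ) + q*0) y = y} ∩ Set.Ico 0 1 =
      (fun j : ℕ => (j:ℝ)/n) '' (Set.Iio n) := by
    ext y
    simp only [Set.mem_inter_iff, Set.mem_setOf_eq, Set.mem_Ico, Set.mem_image, Set.mem_Iio]
    constructor
    · rintro ⟨hy, hy0, hy1⟩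
      rw [hfix_iff] at hy
      obtain ⟨m, hm⟩ := Real.sin_eq_zero_iff.mp hy
      have hmn : (m:ℝ) = n * y := by
        have h1 : Real.pi * (m:ℝ) = Real.pi * ((n:ℝ) * y) := by linarith
        exact mul_left_cancel₀ hπ.ne' h1
      have hym : y = (m:ℝ)/n := by
        rw [hmn]
        field_simp
      have hm0 : 0 ≤ m := by
        by_contra hcon
        push_neg at hcon
        have : (m:ℝ) < 0 := by exact_mod_cast hcon
        have hn0 : (0:ℝ) < n := by positivity
        nlinarith
      have hmn' : m < n := by
        by_contra hcon
        push_neg at hcon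
        have : (n:ℝ) ≤ m := by exact_mod_cast hcon
        have hn0 : (0:ℝ) < n := by positivity
        nlinarith
      refine ⟨m.toNat, ?_, ?_⟩
      · omega
      · rw [hym]
        congr 1
        have h5 : ((m.toNat : ℤ)) = m := Int.toNat_of_nonneg hm0
        exact_mod_cast h5
    · rintro ⟨j, hj, rfl⟩
      have hjn : ((j:ℝ)) < n := by exact_mod_cast hj
      refine ⟨?_, by positivity, by rw [div_lt_one (by positivity)]; exact hjn⟩
      rw [hfix_iff]
      have he : Real.pi * n * ((j:ℝ)/n) = (j:ℤ) * Real.pi := by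
        push_cast
        field_simp
      rw [he, Real.sin_int_mul_pi]
  have hencard : (periodicPts ⇑f).encard = ((q * k : ℕ) : ℕ∞) := by
    rw [periodicPts_encard hF hpq hq htau, hZIco]
    rw [Set.InjOn.encard_image (by
      intro a _ b _ hab
      simp only at hab
      have : (a:ℝ) = b := by
        field_simp at hab
        exact_mod_cast hab
      exact_mod_cast this)]
    rw [← Finset.coe_range, Set.encard_coe_eq_coe_finsetCard, Finset.card_range]
  -- crossing
  have hcrossing : ∀ x ∈ periodicPts ⇑f, IsCrossingPeriodicPt f x := by
    intro x hx
    rw [IsCrossingPeriodicPt, minimalPeriod_eq hF hpq hq htau x hx]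
    intro H hH x' hx' kk hkk ε hε
    have hxper : ((x':ℝ) : UnitAddCircle) ∈ periodicPts ⇑f := by rw [hx']; exact hx
    have hGfix : Gmap F q ((p:ℤ) + q*0) x' = x' :=
      (periodic_iff_Gmap_fixed hF hpq hq htau x').mp hxper
    have hsin0 : Real.sin (Real.pi * n * x') = 0 := (hfix_iff x').mp hGfix
    obtain ⟨m, hm⟩ := Real.sin_eq_zero_iff.mp hsin0
    have hmn : (m:ℝ) = n * x' := by
      have h1 : Real.pi * (m:ℝ) = Real.pi * ((n:ℝ) * x') := by linarith
      exact mul_left_cancel₀ hπ.ne' h1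
    obtain ⟨cst, hcst⟩ := lift_unique (Gmap_isLift hF q ((p:ℤ) + q*0)) hH
    have hcstk : cst = kk := by
      have h1 := hcst x'
      rw [hGfix, hkk] at h1
      have h2 : (kk:ℝ) = cst := by linarith
      exact_mod_cast h2.symm
    set δ : ℝ := min ε (1/n) / 2 with hδ
    have hmin0 : 0 < min ε (1/(n:ℝ)) := lt_min hε (by positivity)
    have hδ0 : 0 < δ := by rw [hδ]; positivity
    have hδε : δ < ε := by
      have h1 : min ε (1/(n:ℝ)) ≤ ε := min_le_left _ _
      rw [hδ]
      linarith
    have hδn : Real.pi * n * δ < Real.pi := by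
      have h1 : min ε (1/(n:ℝ)) ≤ 1/n := min_le_right _ _
      have hn0 : (0:ℝ) < n := by positivity
      have h2 : δ ≤ 1/(2*(n:ℝ)) := by
        rw [hδ]
        calc (min ε (1/(n:ℝ)))/2 = (min ε (1/(n:ℝ))) * (1/2) := by ring
          _ ≤ (1/(n:ℝ)) * (1/2) := mul_le_mul_of_nonneg_right h1 (by norm_num)
          _ = 1/(2*(n:ℝ)) := by ring
      calc Real.pi * n * δ ≤ Real.pi * n * (1/(2*n)) := by
            apply mul_le_mul_of_nonneg_left h2 (by positivity)
        _ = Real.pi / 2 := by field_simp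
        _ < Real.pi := by linarith
    have hsδ : 0 < Real.sin (Real.pi * n * δ) :=
      Real.sin_pos_of_pos_of_lt_pi (by positivity) hδn
    have hplus : Real.sin (Real.pi * n * (x' + δ)) = (-1)^m * Real.sin (Real.pi * n * δ) := by
      have he : Real.pi * n * (x' + δ) = Real.pi * n * δ + (m:ℝ) * Real.pi := by
        rw [hmn]; ring
      rw [he, Real.sin_add_int_mul_pi]
    have hminus : Real.sin (Real.pi * n * (x' - δ)) = -((-1)^m * Real.sin (Real.pi * n * δ)) := by
      have he : Real.pi * n * (x' - δ) = -(Real.pi * n * δ) + (m:ℝ) * Real.pi := by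
        rw [hmn]; ring
      rw [he, Real.sin_add_int_mul_pi, Real.sin_neg]
      ring
    have htransneg : ∀ y : ℝ, Real.sin (Real.pi * n * y) < 0 → H y < y + kk := by
      intro y hy
      have h1 : G0 n y < y := by
        simp only [G0]
        have h2 : Real.sin (Real.pi * n * y)/(2 * Real.pi * n) < 0 :=
          div_neg_of_neg_of_pos hy (by positivity)
        linarith
      have h2 : (G0 n)^[q] y < y := iterate_lt_of_lt (G0_strictMono n hn) h1 q hq
      have h3 : Gmap F q ((p:ℤ) + q*0) y < y := by rw [hGmap_eq]; exact h2
      rw [hcst y, hcstk]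
      linarith
    have htranspos : ∀ y : ℝ, 0 < Real.sin (Real.pi * n * y) → y + kk < H y := by
      intro y hy
      have h1 : y < G0 n y := by
        simp only [G0]
        have h2 : 0 < Real.sin (Real.pi * n * y)/(2 * Real.pi * n) :=
          div_pos hy (by positivity)
        linarith
      have h2 : y < (G0 n)^[q] y := iterate_gt_of_gt (G0_strictMono n hn) h1 q hq
      have h3 : y < Gmap F q ((p:ℤ) + q*0) y := by rw [hGmap_eq]; exact h2
      rw [hcst y, hcstk]
      linarith
    rcases Int.even_or_odd m with hme | hmo
    · have h1 : (-1:ℝ)^m = 1 := hme.neg_one_zpow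
      refine ⟨⟨x' - δ, Set.mem_Ioo.mpr ⟨by linarith, by linarith⟩,
                htransneg _ (by rw [hminus, h1]; linarith)⟩,
              ⟨x' + δ, Set.mem_Ioo.mpr ⟨by linarith, by linarith⟩,
                htranspos _ (by rw [hplus, h1]; linarith)⟩⟩
    · have h1 : (-1:ℝ)^m = -1 := hmo.neg_one_zpow
      refine ⟨⟨x' + δ, Set.mem_Ioo.mpr ⟨by linarith, by linarith⟩,
                htransneg _ (by rw [hplus, h1]; linarith)⟩,
              ⟨x' - δ, Set.mem_Ioo.mpr ⟨by linarith, by linarith⟩,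
                htranspos _ (by rw [hminus, h1]; linarith)⟩⟩
  exact ⟨f, ⟨F, hF⟩, hrot, hencard, hcrossing⟩

/-- For coprime `0 ≤ p < q` and `n ≥ 1`, there is an orientation-preserving circle
homeomorphism with rotation number `p/q` (mod 1) and exactly `n` periodic points, all
crossing, iff `q ∣ n` and `n / q` is even. -/
theorem stmt_16 (p q n : ℕ) (hpq : Nat.Coprime p q) (hp : p < q) (hn : 0 < n) :
    (∃ f : UnitAddCircle ≃ₜ UnitAddCircle, (∃ F : ℝ ≃ₜ ℝ, IsLift F f) ∧
        HasRotationNumber f ((((p : ℝ) / (q : ℝ)) : UnitAddCircle)) ∧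
        (periodicPts ⇑f).encard = (n : ℕ∞) ∧
        ∀ x ∈ periodicPts ⇑f, IsCrossingPeriodicPt f x) ↔
      (q ∣ n ∧ Even (n / q)) := by
  constructor
  · rintro ⟨f, ⟨F0, hF0⟩, hrot, hcard, hcross⟩
    obtain ⟨F, hF, hα⟩ := hrot
    obtain ⟨s, hs⟩ := (circle_eq_iff _ _).mp hα
    have hs' : (p:ℝ)/q = (CD1 hF).translationNumber + s := hs
    have htau : (CD1 hF).translationNumber = p/q + ((-s : ℤ):ℝ) := by
      push_cast
      linarith
    exact forward_main p q n hpq hp hn f F hF (-s) htau hcard hcross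
  · rintro ⟨hdvd, heven⟩
    obtain ⟨k, hk⟩ := hdvd
    have hq : 0 < q := lt_of_le_of_lt (Nat.zero_le p) hp
    have hkq : n / q = k := by rw [hk]; exact Nat.mul_div_cancel_left k hq
    rw [hkq] at heven
    have hk0 : 0 < k := by
      rcases Nat.eq_zero_or_pos k with rfl | h
      · rw [Nat.mul_zero] at hk; omega
      · exact h
    have hmain := backward_main p q k hpq hp hk0 heven
    rwa [← hk] at hmain

end
end

section
/- For every irrational α ∈ S¹ = ℝ/ℤ (i.e. α is not the residue of a rational number), the set {f ∈ Homeo⁺(S¹) : τ(f) = α} is Haar null in Homeo⁺(S¹). In particular, the conjugacy class of every f ∈ Homeo⁺(S¹) with irrational rotation number is Haar null. -/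
open MeasureTheory Set Function

noncomputable section

namespace Stmt17Aux
open CircleDeg1Lift

def iota (z : UnitAddCircle) : ℝ := ((AddCircle.measurableEquivIco (T := 1) 0) z : ℝ)

lemma iota_mem (z : UnitAddCircle) : iota z ∈ Ico (0:ℝ) 1 := by
  have := ((AddCircle.measurableEquivIco (T := 1) 0) z).2
  simpa [iota] using this

lemma iota_measurable : Measurable iota :=
  measurable_subtype_coe.comp (AddCircle.measurableEquivIco (T := 1) 0).measurable

lemma iota_coe (z : UnitAddCircle) : ((iota z : ℝ) : UnitAddCircle) = z := by
  have : (AddCircle.equivIco 1 0).symm ((AddCircle.equivIco 1 0) z) = z :=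
    (AddCircle.equivIco 1 0).symm_apply_apply z
  simpa [iota, AddCircle.measurableEquivIco, AddCircle.equivIco, QuotientAddGroup.equivIcoMod]
    using this

lemma coe_eq_coe {x y : ℝ} (hx : x ∈ Ico (0:ℝ) 1) (hy : y ∈ Ico (0:ℝ) 1)
    (h : (x : UnitAddCircle) = y) : x = y := by
  rwa [AddCircle.coe_eq_coe_iff_of_mem_Ico (a := 0) (by simpa using hx) (by simpa using hy)] at h

lemma iota_eq {y : ℝ} (hy : y ∈ Ico (0:ℝ) 1) : iota ((y : ℝ) : UnitAddCircle) = y :=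
  coe_eq_coe (iota_mem _) hy (by rw [iota_coe])

lemma coe_int_eq_zero (m : ℤ) : ((m : ℝ) : UnitAddCircle) = 0 := by
  rw [AddCircle.coe_eq_zero_iff]; exact ⟨m, by simp⟩

lemma coe_add_int (a : ℝ) (m : ℤ) : ((a + m : ℝ) : UnitAddCircle) = a := by
  have : ((a + m : ℝ) : UnitAddCircle) = (a : UnitAddCircle) + ((m:ℝ) : UnitAddCircle) := rfl
  rw [this, coe_int_eq_zero, add_zero]

lemma exists_int_of_coe_eq {a b : ℝ} (h : (a : UnitAddCircle) = b) : ∃ m : ℤ, a = b + m := by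
  have h2 : ((a - b : ℝ) : UnitAddCircle) = 0 := by
    have : ((a - b : ℝ) : UnitAddCircle) = (a : UnitAddCircle) - b := rfl
    rw [this, h, sub_self]
  rw [AddCircle.coe_eq_zero_iff] at h2
  obtain ⟨n, hn⟩ := h2
  exact ⟨n, by simp at hn; linarith⟩

/-! ### lifts -/

/-- The `CircleDeg1Lift` attached to a lift. -/
def cd1 {F : ℝ ≃ₜ ℝ} {f : UnitAddCircle ≃ₜ UnitAddCircle} (hF : IsLift F f) : CircleDeg1Lift :=
  toCircleDeg1Lift F hF.1.monotone hF.2.1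

@[simp] lemma cd1_apply {F : ℝ ≃ₜ ℝ} {f} (hF : IsLift F f) (x : ℝ) : cd1 hF x = F x := rfl

lemma lift_map_add_int {F : ℝ ≃ₜ ℝ} {f} (hF : IsLift F f) (x : ℝ) (m : ℤ) :
    F (x + m) = F x + m := (cd1 hF).map_add_int x m

lemma liftMul {F G : ℝ ≃ₜ ℝ} {f g : UnitAddCircle ≃ₜ UnitAddCircle}
    (hF : IsLift F f) (hG : IsLift G g) : IsLift (G.trans F) (f * g) := by
  refine ⟨hF.1.comp hG.1, fun x => ?_, fun x => ?_⟩
  · show F (G (x + 1)) = F (G x) + 1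
    rw [hG.2.1, hF.2.1]
  · show f (g (x : UnitAddCircle)) = ((F (G x) : ℝ) : UnitAddCircle)
    rw [hG.2.2, hF.2.2]

lemma liftInv {F : ℝ ≃ₜ ℝ} {f : UnitAddCircle ≃ₜ UnitAddCircle}
    (hF : IsLift F f) : IsLift F.symm f⁻¹ := by
  obtain ⟨hFm, hFp, hFl⟩ := hF
  refine ⟨fun a b hab => ?_, fun x => ?_, fun x => ?_⟩
  · have h : F (F.symm a) < F (F.symm b) := by
      rw [F.apply_symm_apply, F.apply_symm_apply]; exact hab
    exact hFm.lt_iff_lt.mp h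
  · apply F.injective
    rw [F.apply_symm_apply, hFp, F.apply_symm_apply]
  · show f.symm (x : UnitAddCircle) = ((F.symm x : ℝ) : UnitAddCircle)
    have h : f ((F.symm x : ℝ) : UnitAddCircle) = ((x : ℝ) : UnitAddCircle) := by
      rw [hFl, F.apply_symm_apply]
    rw [← h, f.symm_apply_apply]

/-- shift a lift by an integer -/
lemma liftShift {F : ℝ ≃ₜ ℝ} {f : UnitAddCircle ≃ₜ UnitAddCircle} (hF : IsLift F f) (m : ℤ) :
    IsLift (F.trans (Homeomorph.addRight (m : ℝ))) f := by
  refine ⟨fun a b hab => by simpa using hF.1 hab, fun x => ?_, fun x => ?_⟩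
  · show F (x+1) + (m:ℝ) = F x + (m:ℝ) + 1
    rw [hF.2.1]; ring
  · show f (x : UnitAddCircle) = ((F x + m : ℝ) : UnitAddCircle)
    rw [hF.2.2 x, coe_add_int]

lemma exists_normalized_lift (f : UnitAddCircle ≃ₜ UnitAddCircle)
    (hf : ∃ F : ℝ ≃ₜ ℝ, IsLift F f) :
    ∃ F : ℝ ≃ₜ ℝ, IsLift F f ∧ F 0 ∈ Ico (0:ℝ) 1 := by
  obtain ⟨F, hF⟩ := hf
  refine ⟨F.trans (Homeomorph.addRight ((-⌊F 0⌋ : ℤ) : ℝ)), liftShift hF _, ?_⟩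
  show F 0 + ((-⌊F 0⌋ : ℤ) : ℝ) ∈ Ico (0:ℝ) 1
  push_cast
  constructor
  · rw [← sub_eq_add_neg, sub_nonneg]; exact Int.floor_le _
  · rw [← sub_eq_add_neg, sub_lt_iff_lt_add]
    simpa [add_comm] using Int.lt_floor_add_one (F 0)

/-- two lifts of the same map differ by an integer, and so do their translation numbers -/
lemma lift_unique {f : UnitAddCircle ≃ₜ UnitAddCircle} {F G : ℝ ≃ₜ ℝ}
    (hF : IsLift F f) (hG : IsLift G f) :
    ∃ k : ℤ, (∀ x, G x = F x + k) ∧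
      (cd1 hG).translationNumber = (cd1 hF).translationNumber + k := by
  have hint : ∀ x : ℝ, ∃ m : ℤ, G x - F x = m := by
    intro x
    have : ((F x : ℝ) : UnitAddCircle) = G x := by rw [← hF.2.2 x, hG.2.2 x]
    obtain ⟨m, hm⟩ := exists_int_of_coe_eq this.symm
    exact ⟨m, by linarith⟩
  set d : ℝ → ℝ := fun x => G x - F x with hd
  have hdc : Continuous d := G.continuous.sub F.continuous
  obtain ⟨k, hk⟩ := hint 0
  have hconst : ∀ x, d x = k := by
    intro x
    obtain ⟨n, hn⟩ := hint x
    show G x - F x = (k:ℝ)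
    rw [hn]
    norm_cast
    by_contra hnk
    have hsub : uIcc (d 0) (d x) ⊆ d '' uIcc 0 x :=
      intermediate_value_uIcc hdc.continuousOn
    have hd0 : d 0 = (k:ℝ) := hk
    have hdx : d x = (n:ℝ) := hn
    have hminmax : min (d 0) (d x) = (min k n : ℤ) ∧ max (d 0) (d x) = (max k n : ℤ) := by
      constructor
      · rw [hd0, hdx]; push_cast [min_def]; split_ifs <;> simp_all [min_def]
      · rw [hd0, hdx]; push_cast [max_def]; split_ifs <;> simp_all [max_def]
    have hgap : ((min k n : ℤ) : ℝ) + 1 ≤ ((max k n : ℤ) : ℝ) := by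
      have : min k n + 1 ≤ max k n := by omega
      exact_mod_cast this
    have hv : ((min k n : ℤ) : ℝ) + 1/2 ∈ uIcc (d 0) (d x) := by
      rw [uIcc, hminmax.1, hminmax.2]
      constructor
      · linarith
      · linarith
    obtain ⟨y, _, hy⟩ := hsub hv
    obtain ⟨m, hm⟩ := hint y
    have : (2 * m : ℝ) = 2 * (min k n : ℤ) + 1 := by
      have hdy : d y = (m:ℝ) := hm
      rw [hdy] at hy; linarith
    have : (2 * m : ℤ) = 2 * min k n + 1 := by exact_mod_cast this
    omega
  refine ⟨k, fun x => by have := hconst x; simp only [hd] at this; linarith, ?_⟩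
  have hGk : cd1 hG = (CircleDeg1Lift.translate (Multiplicative.ofAdd (k:ℝ)) : CircleDeg1Liftˣ) * cd1 hF := by
    ext x
    have := hconst x
    simp only [hd] at this
    show G x = (k:ℝ) + F x
    linarith
  have hcomm : Commute ((CircleDeg1Lift.translate (Multiplicative.ofAdd (k:ℝ)) : CircleDeg1Liftˣ) : CircleDeg1Lift) (cd1 hF) := by
    ext x
    show (k:ℝ) + F x = F ((k:ℝ) + x)
    rw [add_comm (k:ℝ) x, lift_map_add_int hF, add_comm]
  rw [hGk, CircleDeg1Lift.translationNumber_mul_of_commute hcomm,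
    CircleDeg1Lift.translationNumber_translate, add_comm]

/-! ### The canonical lift value function `Phi` -/

def Phi (f : HomeoPlusCircle) (x : ℝ) : ℝ :=
  iota ((f : UnitAddCircle ≃ₜ UnitAddCircle) (((0:ℝ) : UnitAddCircle)))
    + (⌊x⌋ : ℝ)
    + iota ((f : UnitAddCircle ≃ₜ UnitAddCircle) ((x : UnitAddCircle))
        - (f : UnitAddCircle ≃ₜ UnitAddCircle) (((0:ℝ) : UnitAddCircle)))

lemma Phi_eq_lift (f : HomeoPlusCircle) {F : ℝ ≃ₜ ℝ}
    (hF : IsLift F (f : UnitAddCircle ≃ₜ UnitAddCircle)) (h0 : F 0 ∈ Ico (0:ℝ) 1) :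
    ∀ x, Phi f x = F x := by
  have key : ∀ x ∈ Ico (0:ℝ) 1, Phi f x = F x := by
    intro x hx
    have hc : iota ((f : UnitAddCircle ≃ₜ UnitAddCircle) (((0:ℝ) : UnitAddCircle))) = F 0 := by
      rw [hF.2.2 0]; exact iota_eq h0
    have hFx : F x - F 0 ∈ Ico (0:ℝ) 1 := by
      constructor
      · simpa using hF.1.monotone hx.1
      · have : F x < F 1 := hF.1 hx.2
        have h1 : F 1 = F 0 + 1 := by simpa using hF.2.1 0
        linarith
    have hdiff : iota ((f : UnitAddCircle ≃ₜ UnitAddCircle) ((x : UnitAddCircle))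
        - (f : UnitAddCircle ≃ₜ UnitAddCircle) (((0:ℝ) : UnitAddCircle))) = F x - F 0 := by
      rw [hF.2.2 x, hF.2.2 0]
      have : ((F x : ℝ) : UnitAddCircle) - ((F 0 : ℝ) : UnitAddCircle)
          = ((F x - F 0 : ℝ) : UnitAddCircle) := rfl
      rw [this]
      exact iota_eq hFx
    have hfl : ⌊x⌋ = 0 := Int.floor_eq_zero_iff.2 hx
    rw [Phi, hc, hdiff, hfl]
    push_cast
    ring
  intro x
  have hxfr : Int.fract x ∈ Ico (0:ℝ) 1 := ⟨Int.fract_nonneg x, Int.fract_lt_one x⟩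
  have hco : ((x : ℝ) : UnitAddCircle) = ((Int.fract x : ℝ) : UnitAddCircle) := by
    conv_lhs => rw [show x = Int.fract x + (⌊x⌋ : ℤ) by rw [Int.fract]; ring]
    exact coe_add_int _ _
  have hPhi : Phi f x = Phi f (Int.fract x) + ⌊x⌋ := by
    rw [Phi, Phi, hco, Int.floor_fract]
    push_cast
    ring
  have hFx : F x = F (Int.fract x) + ⌊x⌋ := by
    conv_lhs => rw [show x = Int.fract x + ⌊x⌋ by rw [Int.fract]; ring]
    exact lift_map_add_int hF _ _
  rw [hPhi, hFx, key _ hxfr]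

/-- every element of the subgroup has a normalized lift, and `Phi f` is that lift -/
lemma exists_lift_Phi (f : HomeoPlusCircle) :
    ∃ F : ℝ ≃ₜ ℝ, ∃ hF : IsLift F (f : UnitAddCircle ≃ₜ UnitAddCircle),
      F 0 ∈ Ico (0:ℝ) 1 ∧ ∀ x, Phi f x = F x := by
  obtain ⟨F, hF, h0⟩ := exists_normalized_lift _ f.2
  exact ⟨F, hF, h0, Phi_eq_lift f hF h0⟩

/-! ### iterates and measurability -/

def iterPhi : ℕ → HomeoPlusCircle → ℝ
  | 0, _ => 0
  | (n+1), f => Phi f (iterPhi n f)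

lemma iterPhi_eq (f : HomeoPlusCircle) {F : ℝ ≃ₜ ℝ}
    (hF : IsLift F (f : UnitAddCircle ≃ₜ UnitAddCircle)) (h0 : F 0 ∈ Ico (0:ℝ) 1) (n : ℕ) :
    iterPhi n f = F^[n] 0 := by
  induction n with
  | zero => rfl
  | succ n ih =>
    rw [iterPhi, ih, Function.iterate_succ_apply', Phi_eq_lift f hF h0]

/-- the continuous inclusion into `C(S¹, S¹)` -/
def toC (f : HomeoPlusCircle) : C(UnitAddCircle, UnitAddCircle) :=
  ⟨⇑(f : UnitAddCircle ≃ₜ UnitAddCircle), (f : UnitAddCircle ≃ₜ UnitAddCircle).continuous⟩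

lemma continuous_toC : Continuous toC := by
  have h1 : Continuous (fun f : HomeoPlusCircle => (f : UnitAddCircle ≃ₜ UnitAddCircle)) :=
    continuous_subtype_val
  exact (continuous_induced_dom).comp h1

lemma measurable_phi_uncurried : Measurable (fun p : HomeoPlusCircle × ℝ => Phi p.1 p.2) := by
  have hev0 : Continuous (fun f : HomeoPlusCircle =>
      (f : UnitAddCircle ≃ₜ UnitAddCircle) (((0:ℝ) : UnitAddCircle))) := by
    show Continuous fun f : HomeoPlusCircle => (toC f) (((0:ℝ) : UnitAddCircle))
    exact (continuous_eval_const _).comp continuous_toC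
  have hev : Continuous (fun p : HomeoPlusCircle × ℝ =>
      (p.1 : UnitAddCircle ≃ₜ UnitAddCircle) ((p.2 : UnitAddCircle))) := by
    have : Continuous (fun p : HomeoPlusCircle × ℝ =>
        ((toC p.1, ((p.2 : ℝ) : UnitAddCircle)) : C(UnitAddCircle, UnitAddCircle) × UnitAddCircle)) :=
      (continuous_toC.comp continuous_fst).prodMk
        ((AddCircle.continuous_mk' 1).comp continuous_snd)
    show Continuous fun p : HomeoPlusCircle × ℝ => (toC p.1) ((p.2 : UnitAddCircle))
    exact continuous_eval.comp this
  have h1 : Measurable (fun p : HomeoPlusCircle × ℝ =>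
      iota ((p.1 : UnitAddCircle ≃ₜ UnitAddCircle) (((0:ℝ) : UnitAddCircle)))) :=
    iota_measurable.comp (hev0.comp continuous_fst).measurable
  have h2 : Measurable (fun p : HomeoPlusCircle × ℝ => ((⌊p.2⌋ : ℤ) : ℝ)) := by
    have : Measurable (fun p : HomeoPlusCircle × ℝ => ⌊p.2⌋) :=
      Int.measurable_floor.comp measurable_snd
    exact measurable_from_top.comp this
  have h3 : Measurable (fun p : HomeoPlusCircle × ℝ =>
      iota ((p.1 : UnitAddCircle ≃ₜ UnitAddCircle) ((p.2 : UnitAddCircle))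
        - (p.1 : UnitAddCircle ≃ₜ UnitAddCircle) (((0:ℝ) : UnitAddCircle)))) :=
    iota_measurable.comp (hev.sub (hev0.comp continuous_fst)).measurable
  exact (h1.add h2).add h3

lemma measurable_iterPhi (n : ℕ) : Measurable (iterPhi n) := by
  induction n with
  | zero => exact measurable_const
  | succ n ih =>
    have : (iterPhi (n+1)) = (fun p : HomeoPlusCircle × ℝ => Phi p.1 p.2)
        ∘ (fun f => (f, iterPhi n f)) := rfl
    rw [this]
    exact measurable_phi_uncurried.comp (measurable_id.prodMk ih)

/-! ### the Borel hull `BSet` -/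

open Filter in
def BSet (α : ℝ) : Set HomeoPlusCircle :=
  {f | ∃ m : ℤ, Tendsto (fun n : ℕ => iterPhi n f / n) atTop (nhds (α + m))}

open Filter in
lemma measurableSet_BSet (α : ℝ) : MeasurableSet (BSet α) := by
  have : BSet α = ⋃ m : ℤ,
      {f | Tendsto (fun n : ℕ => iterPhi n f / n) atTop (nhds (α + m))} := by
    ext f; simp [BSet]
  rw [this]
  refine MeasurableSet.iUnion fun m => ?_
  exact measurableSet_tendsto _ fun n => (measurable_iterPhi n).div_const _

open Filter in
lemma tendsto_iterPhi (f : HomeoPlusCircle) {F : ℝ ≃ₜ ℝ}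
    (hF : IsLift F (f : UnitAddCircle ≃ₜ UnitAddCircle)) (h0 : F 0 ∈ Ico (0:ℝ) 1) :
    Tendsto (fun n : ℕ => iterPhi n f / n) atTop (nhds ((cd1 hF).translationNumber)) := by
  have h := (cd1 hF).tendsto_translation_number₀
  refine h.congr fun n => ?_
  congr 1
  rw [CircleDeg1Lift.coe_pow]
  exact (iterPhi_eq f hF h0 n).symm

lemma subset_BSet (α : ℝ) :
    {f : HomeoPlusCircle |
      HasRotationNumber (f : UnitAddCircle ≃ₜ UnitAddCircle) ((α : UnitAddCircle))} ⊆ BSet α := by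
  intro f hf
  obtain ⟨F, hF, hτ⟩ := hf
  obtain ⟨G, hG, h0, -⟩ := exists_lift_Phi f
  obtain ⟨k, -, hk⟩ := lift_unique hF hG
  obtain ⟨j, hj⟩ := exists_int_of_coe_eq hτ
  refine ⟨j + k, ?_⟩
  have : (cd1 hG).translationNumber = α + (j + k : ℤ) := by
    rw [hk]
    show (cd1 hF).translationNumber + (k:ℝ) = _
    rw [show (cd1 hF).translationNumber
        = (toCircleDeg1Lift F hF.1.monotone hF.2.1).translationNumber from rfl, hj]
    push_cast; ring
  rw [← this]
  exact tendsto_iterPhi f hG h0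

open Filter in
lemma tau_of_mem_BSet {α : ℝ} {f : HomeoPlusCircle} (hf : f ∈ BSet α)
    {F : ℝ ≃ₜ ℝ} (hF : IsLift F (f : UnitAddCircle ≃ₜ UnitAddCircle)) :
    ∃ m : ℤ, (cd1 hF).translationNumber = α + m := by
  obtain ⟨G, hG, h0, -⟩ := exists_lift_Phi f
  obtain ⟨m, hm⟩ := hf
  have huniq : (cd1 hG).translationNumber = α + m :=
    tendsto_nhds_unique (tendsto_iterPhi f hG h0) hm
  obtain ⟨k, -, hk⟩ := lift_unique hF hG
  refine ⟨m - k, ?_⟩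
  have : (cd1 hF).translationNumber = (cd1 hG).translationNumber - k := by rw [hk]; ring
  rw [this, huniq]
  push_cast; ring

/-! ### Diophantine approximation -/

lemma exists_pos_approx {β : ℝ} (hβ : Irrational β) {c : ℝ} (hc : 0 < c) :
    ∃ (q : ℕ) (p : ℤ), 1 ≤ q ∧ 0 < q * β - p ∧ q * β - p < c := by
  set c' : ℝ := min c 1 with hc'
  have hc'0 : 0 < c' := lt_min hc one_pos
  have hc'c : c' ≤ c := min_le_left _ _
  have hc'1 : c' ≤ 1 := min_le_right _ _
  set S : AddSubgroup ℝ := AddSubgroup.closure {β, 1} with hS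
  have hdense : Dense (S : Set ℝ) := by
    rcases S.dense_or_cyclic with h | ⟨a, ha⟩
    · exact h
    · exfalso
      have hβS : β ∈ S := AddSubgroup.subset_closure (by simp)
      have h1S : (1:ℝ) ∈ S := AddSubgroup.subset_closure (by simp)
      rw [ha, AddSubgroup.mem_closure_singleton] at hβS h1S
      obtain ⟨m, hm⟩ := hβS
      obtain ⟨n, hn⟩ := h1S
      have hn0 : n ≠ 0 := by rintro rfl; simp at hn
      refine hβ ⟨(m : ℚ) / (n : ℚ), ?_⟩
      have hnn : (n:ℝ) ≠ 0 := Int.cast_ne_zero.2 hn0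
      have ha' : a = 1 / (n:ℝ) := by
        field_simp
        simpa [zsmul_eq_mul, mul_comm] using hn
      push_cast
      rw [← hm, ha', zsmul_eq_mul]
      field_simp
  obtain ⟨s, hsS, hs⟩ := hdense.exists_mem_open isOpen_Ioo
    (⟨c'/2, by constructor <;> [linarith; linarith]⟩ : (Ioo (0:ℝ) c').Nonempty)
  have hsS' : s ∈ AddSubgroup.closure ({β, 1} : Set ℝ) := hsS
  rw [AddSubgroup.mem_closure_pair] at hsS'
  clear hsS
  have hsS := hsS'
  obtain ⟨m, n, hmn⟩ := hsS
  simp only [zsmul_eq_mul, mul_one] at hmn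
  obtain ⟨hs0, hs1⟩ := hs
  rcases lt_trichotomy m 0 with hm | hm | hm
  · -- m < 0 : use the multiple trick
    have hsirr : Irrational s := by
      rw [← hmn]
      exact ((hβ.intCast_mul (ne_of_lt hm)).add_intCast n)
    set k : ℤ := ⌊1/s⌋ with hk
    have hk1 : 1 ≤ k := by
      rw [hk, Int.le_floor]
      rw [le_div_iff₀ hs0]
      push_cast
      linarith
    have hks : (k:ℝ) * s ≤ 1 := by
      have := Int.floor_le (1/s)
      calc (k:ℝ) * s ≤ (1/s) * s := by
            apply mul_le_mul_of_nonneg_right _ hs0.le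
            exact this
        _ = 1 := by field_simp
    have hksne : (k:ℝ) * s ≠ 1 := by
      intro h
      have hk0 : (k:ℝ) ≠ 0 := by positivity
      have : s = 1 / (k:ℝ) := by field_simp; linarith
      refine hsirr ⟨1 / (k:ℚ), ?_⟩
      push_cast
      rw [this]
    have hlt : 1 - (k:ℝ) * s < s := by
      have := Int.lt_floor_add_one (1/s)
      have h2 : 1/s < (k:ℝ) + 1 := this
      have := (div_lt_iff₀ hs0).1 h2
      linarith
    refine ⟨(-(k*m)).toNat, k*n - 1, ?_, ?_, ?_⟩
    · have : 0 < -(k*m) := by nlinarith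
      omega
    · have hq : ((-(k*m)).toNat : ℝ) = -((k:ℝ) * m) := by
        have h0 : 0 ≤ -(k*m) := by nlinarith [hk1, hm]
        have h0' : (((-(k*m)).toNat : ℤ)) = -(k*m) := Int.toNat_of_nonneg h0
        exact_mod_cast congrArg (Int.cast : ℤ → ℝ) h0'
      rw [hq]
      push_cast
      have : -((k:ℝ)*m) * β - ((k:ℝ)*n - 1) = 1 - (k:ℝ)*s := by rw [← hmn]; ring
      rw [this]
      cases' (lt_or_eq_of_le hks) with h h
      · linarith
      · exact absurd h hksne
    · have hq : ((-(k*m)).toNat : ℝ) = -((k:ℝ) * m) := by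
        have h0 : 0 ≤ -(k*m) := by nlinarith [hk1, hm]
        have h0' : (((-(k*m)).toNat : ℤ)) = -(k*m) := Int.toNat_of_nonneg h0
        exact_mod_cast congrArg (Int.cast : ℤ → ℝ) h0'
      rw [hq]
      push_cast
      have : -((k:ℝ)*m) * β - ((k:ℝ)*n - 1) = 1 - (k:ℝ)*s := by rw [← hmn]; ring
      rw [this]
      linarith
  · -- m = 0 : impossible
    exfalso
    subst hm
    simp at hmn
    rw [← hmn] at hs0 hs1
    have : 1 ≤ n := by exact_mod_cast Int.lt_iff_add_one_le.1 (by exact_mod_cast hs0 : (0:ℤ) < n)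
    have : (1:ℝ) ≤ (n:ℝ) := by exact_mod_cast this
    linarith
  · -- m > 0
    have hs0' : 0 < (m:ℝ) * β + n := by rw [hmn]; exact hs0
    have hs1' : (m:ℝ) * β + n < c' := by rw [hmn]; exact hs1
    have hm0' : ((m.toNat : ℤ)) = m := Int.toNat_of_nonneg hm.le
    have hq : (m.toNat : ℝ) = (m:ℝ) := by
      exact_mod_cast congrArg (Int.cast : ℤ → ℝ) hm0'
    refine ⟨m.toNat, -n, by omega, ?_, ?_⟩
    · rw [hq]
      push_cast
      linarith
    · rw [hq]
      push_cast
      linarith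

/-! ### no two parameters with the same irrational translation number -/

lemma no_two_levels {F G : CircleDeg1Lift} {c β : ℝ} (hc : 0 < c)
    (hFG : ∀ x, F x + c ≤ G x) (hβ : Irrational β)
    (hF : F.translationNumber = β) (hG : G.translationNumber = β) : False := by
  obtain ⟨q, p, hq, h1, h2⟩ := exists_pos_approx hβ hc
  have hτq : (F ^ q).translationNumber = q * β := by
    rw [CircleDeg1Lift.translationNumber_pow, hF]
  have hlt : ∀ x, x + (p:ℝ) < (F ^ q) x := by
    intro x
    refine (F ^ q).lt_map_of_int_lt_translationNumber ?_ x
    rw [hτq]; linarith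
  have hpow : ∀ n : ℕ, ∀ x, (F ^ (n+1)) x + c ≤ (G ^ (n+1)) x := by
    intro n
    induction n with
    | zero => intro x; simpa using hFG x
    | succ n ih =>
      intro x
      have e1 : (F ^ (n+2)) x = F ((F ^ (n+1)) x) := by
        rw [pow_succ' F (n+1)]; rfl
      have e2 : (G ^ (n+2)) x = G ((G ^ (n+1)) x) := by
        rw [pow_succ' G (n+1)]; rfl
      rw [e1, e2]
      have h3 : G ((F ^ (n+1)) x) ≥ F ((F ^ (n+1)) x) + c := hFG _
      have h4 : G ((G ^ (n+1)) x) ≥ G ((F ^ (n+1)) x) := by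
        apply G.mono
        linarith [ih x]
      linarith
  obtain ⟨n, rfl⟩ : ∃ n, q = n + 1 := ⟨q - 1, by omega⟩
  have hle : (p:ℝ) + c ≤ (G ^ (n+1)).translationNumber := by
    refine (G ^ (n+1)).le_translationNumber_of_add_le ?_
    intro x
    have ha := hlt x
    have hb := hpow n x
    linarith
  rw [CircleDeg1Lift.translationNumber_pow, hG] at hle
  push_cast at hle h1 h2
  linarith

/-! ### the rotation flow and the measure -/

def rotCirc (t : ℝ) : UnitAddCircle ≃ₜ UnitAddCircle :=
  Homeomorph.addLeft ((t : ℝ) : UnitAddCircle)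

lemma isLift_rot (t : ℝ) : IsLift (Homeomorph.addLeft t) (rotCirc t) := by
  refine ⟨fun a b hab => by simpa using hab, fun x => by simp [add_assoc], fun x => ?_⟩
  show ((t : ℝ) : UnitAddCircle) + (x : UnitAddCircle) = ((t + x : ℝ) : UnitAddCircle)
  rfl

def rot (t : ℝ) : HomeoPlusCircle := ⟨rotCirc t, ⟨_, isLift_rot t⟩⟩

lemma continuous_rot : Continuous rot := by
  apply Continuous.subtype_mk
  apply continuous_induced_rng.2
  have hjoint : Continuous fun p : ℝ × UnitAddCircle => ((p.1 : UnitAddCircle) + p.2) :=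
    ((AddCircle.continuous_mk' 1).comp continuous_fst).add continuous_snd
  exact ((ContinuousMap.curry ⟨_, hjoint⟩).continuous).congr fun t => by ext x; rfl

lemma continuous_conjMap (g h : HomeoPlusCircle) : Continuous fun b : HomeoPlusCircle => g * b * h := by
  apply Continuous.subtype_mk
  apply continuous_induced_rng.2
  exact (((ContinuousMap.continuous_postcomp (toC g)).comp
    ((ContinuousMap.continuous_precomp (toC h)).comp continuous_toC)).congr
      fun b => by ext x; rfl)

def mu0 : Measure HomeoPlusCircle := (volume.restrict (Ioc (0:ℝ) 1)).map rot

lemma mu0_prob : IsProbabilityMeasure mu0 := by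
  constructor
  rw [mu0, Measure.map_apply continuous_rot.measurable MeasurableSet.univ]
  simp [Real.volume_Ioc]

open Filter in
lemma transl_null {α : ℝ} (hα : Irrational α) (g h : HomeoPlusCircle) :
    mu0 ((fun b => g * b * h) '' BSet α) = 0 := by
  have himg : (fun b : HomeoPlusCircle => g * b * h) '' BSet α
      = (fun b : HomeoPlusCircle => g⁻¹ * b * h⁻¹) ⁻¹' BSet α := by
    ext b
    constructor
    · rintro ⟨a, ha, rfl⟩
      have : g⁻¹ * (g * a * h) * h⁻¹ = a := by group
      simpa [Set.mem_preimage, this] using ha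
    · intro hb
      exact ⟨g⁻¹ * b * h⁻¹, hb, by group⟩
  have hmeas : MeasurableSet ((fun b : HomeoPlusCircle => g⁻¹ * b * h⁻¹) ⁻¹' BSet α) :=
    (continuous_conjMap g⁻¹ h⁻¹).measurable (measurableSet_BSet α)
  rw [himg, mu0, Measure.map_apply continuous_rot.measurable hmeas]
  -- lifts of g⁻¹ and h⁻¹
  obtain ⟨U, hU⟩ := (g⁻¹).2
  obtain ⟨V, hV⟩ := (h⁻¹).2
  -- the explicit lift of g⁻¹ * rot t * h⁻¹
  have hW : ∀ t : ℝ, IsLift (V.trans ((Homeomorph.addLeft t).trans U))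
      ((g⁻¹ * rot t * h⁻¹ : HomeoPlusCircle) : UnitAddCircle ≃ₜ UnitAddCircle) := by
    intro t
    show IsLift (V.trans ((Homeomorph.addLeft t).trans U))
      ((((g⁻¹ : HomeoPlusCircle) : UnitAddCircle ≃ₜ UnitAddCircle) * rotCirc t)
        * ((h⁻¹ : HomeoPlusCircle) : UnitAddCircle ≃ₜ UnitAddCircle))
    exact liftMul (liftMul hU (isLift_rot t)) hV
  set Sbad : Set ℝ := ⋃ m : ℤ,
    {t : ℝ | (cd1 (hW t)).translationNumber = α + m} with hSbad
  have hsub : rot ⁻¹' ((fun b : HomeoPlusCircle => g⁻¹ * b * h⁻¹) ⁻¹' BSet α) ⊆ Sbad := by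
    intro t ht
    have : g⁻¹ * rot t * h⁻¹ ∈ BSet α := ht
    obtain ⟨m, hm⟩ := tau_of_mem_BSet this (hW t)
    exact Set.mem_iUnion.2 ⟨m, hm⟩
  have key : ∀ (m : ℤ) (t₁ t₂ : ℝ), t₁ < t₂ →
      (cd1 (hW t₁)).translationNumber = α + m →
      (cd1 (hW t₂)).translationNumber = α + m → False := by
    intro m t₁ t₂ hlt h₁ h₂
    set δ : ℝ := t₂ - t₁ with hδ
    have hδ0 : 0 < δ := sub_pos.2 hlt
    set φ : ℝ → ℝ := fun y => U (y + δ) - U y with hφ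
    have hφc : Continuous φ := (U.continuous.comp (continuous_id.add continuous_const)).sub U.continuous
    obtain ⟨y₀, hy₀, hmin⟩ := isCompact_Icc.exists_isMinOn (⟨0, by norm_num⟩ : (Icc (0:ℝ) 1).Nonempty)
      hφc.continuousOn
    set c : ℝ := φ y₀ with hc
    have hc0 : 0 < c := by
      have : U y₀ < U (y₀ + δ) := hU.1 (by linarith)
      simp only [hc, hφ]
      linarith
    have hφper : ∀ y : ℝ, φ y = φ (Int.fract y) := by
      intro y
      have hy : y = Int.fract y + (⌊y⌋ : ℤ) := by rw [Int.fract]; ring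
      have h1 : U (y + δ) = U (Int.fract y + δ) + (⌊y⌋ : ℤ) := by
        conv_lhs => rw [hy]
        rw [show Int.fract y + (⌊y⌋:ℤ) + δ = Int.fract y + δ + (⌊y⌋:ℤ) by ring]
        exact lift_map_add_int hU _ _
      have h2 : U y = U (Int.fract y) + (⌊y⌋ : ℤ) := by
        conv_lhs => rw [hy]
        exact lift_map_add_int hU _ _
      simp only [hφ]
      rw [h1, h2]
      ring
    have hφge : ∀ y : ℝ, c ≤ φ y := by
      intro y
      rw [hφper y]
      exact hmin ⟨Int.fract_nonneg y, (Int.fract_lt_one y).le⟩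
    have hgap : ∀ x : ℝ, (cd1 (hW t₁)) x + c ≤ (cd1 (hW t₂)) x := by
      intro x
      have : (cd1 (hW t₁)) x = U (t₁ + V x) := rfl
      have h2' : (cd1 (hW t₂)) x = U (t₂ + V x) := rfl
      rw [this, h2']
      have := hφge (t₁ + V x)
      simp only [hφ] at this
      have heq : t₁ + V x + δ = t₂ + V x := by rw [hδ]; ring
      rw [heq] at this
      linarith
    exact no_two_levels hc0 hgap (hα.add_intCast m) h₁ h₂
  have hcnt : Sbad.Countable := by
    refine Set.countable_iUnion fun m => Set.Subsingleton.countable ?_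
    intro t₁ h₁ t₂ h₂
    by_contra hne
    rcases Ne.lt_or_gt hne with hlt | hlt
    · exact key m t₁ t₂ hlt h₁ h₂
    · exact key m t₂ t₁ hlt h₂ h₁
  have hvol : volume Sbad = 0 := hcnt.measure_zero _
  have hres : (volume.restrict (Ioc (0:ℝ) 1)) Sbad = 0 :=
    le_antisymm (le_trans (Measure.le_iff'.1 Measure.restrict_le_self Sbad) hvol.le) zero_le
  exact measure_mono_null hsub hres

/-! ### conjugation invariance of the rotation number -/

lemma hasRotationNumber_conj {f : HomeoPlusCircle} {α : ℝ}
    (hf : HasRotationNumber (f : UnitAddCircle ≃ₜ UnitAddCircle) ((α : ℝ) : UnitAddCircle))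
    (h : HomeoPlusCircle) :
    HasRotationNumber ((h⁻¹ * f * h : HomeoPlusCircle) : UnitAddCircle ≃ₜ UnitAddCircle)
      ((α : ℝ) : UnitAddCircle) := by
  obtain ⟨F, hF, hτ⟩ := hf
  obtain ⟨H, hH⟩ := h.2
  have hK : IsLift (H.trans (F.trans H.symm))
      ((h⁻¹ * f * h : HomeoPlusCircle) : UnitAddCircle ≃ₜ UnitAddCircle) := by
    show IsLift (H.trans (F.trans H.symm))
      ((((h⁻¹ : HomeoPlusCircle) : UnitAddCircle ≃ₜ UnitAddCircle)
        * (f : UnitAddCircle ≃ₜ UnitAddCircle))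
        * ((h : HomeoPlusCircle) : UnitAddCircle ≃ₜ UnitAddCircle))
    exact liftMul (liftMul (liftInv hH) hF) hH
  refine ⟨_, hK, ?_⟩
  -- the translation numbers agree
  have hHunit_val : (cd1 hH) * (cd1 (liftInv hH)) = 1 := by
    ext x
    show H (H.symm x) = x
    exact H.apply_symm_apply x
  have hHunit_inv : (cd1 (liftInv hH)) * (cd1 hH) = 1 := by
    ext x
    show H.symm (H x) = x
    exact H.symm_apply_apply x
  set Hu : CircleDeg1Liftˣ := ⟨cd1 hH, cd1 (liftInv hH), hHunit_val, hHunit_inv⟩ with hHu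
  have hKeq : toCircleDeg1Lift (H.trans (F.trans H.symm)) hK.1.monotone hK.2.1
      = (↑Hu⁻¹ : CircleDeg1Lift) * (cd1 hF) * (↑Hu : CircleDeg1Lift) := by
    ext x
    show H.symm (F (H x)) = H.symm (F (H x))
    rfl
  rw [hKeq, CircleDeg1Lift.translationNumber_conj_eq']
  exact hτ

end Stmt17Aux

/-- For every irrational `α`, the set of `f ∈ Homeo⁺(S¹)` with rotation number `α` (mod 1) is
Haar null; in particular, the conjugacy class of every element with irrational rotation
number is Haar null. -/
theorem stmt_17 (α : ℝ) (hα : Irrational α) :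
    IsHaarNull {f : HomeoPlusCircle |
        HasRotationNumber (f : UnitAddCircle ≃ₜ UnitAddCircle) ((α : UnitAddCircle))} ∧
      ∀ f : HomeoPlusCircle,
        HasRotationNumber (f : UnitAddCircle ≃ₜ UnitAddCircle) ((α : UnitAddCircle)) →
          IsHaarNull {g : HomeoPlusCircle | ∃ h : HomeoPlusCircle, g = h⁻¹ * f * h} := by
  constructor
  · exact ⟨Stmt17Aux.BSet α, Stmt17Aux.subset_BSet α, Stmt17Aux.measurableSet_BSet α,
      Stmt17Aux.mu0, Stmt17Aux.mu0_prob, fun g h => Stmt17Aux.transl_null hα g h⟩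
  · intro f hf
    refine ⟨Stmt17Aux.BSet α, ?_, Stmt17Aux.measurableSet_BSet α,
      Stmt17Aux.mu0, Stmt17Aux.mu0_prob, fun g h => Stmt17Aux.transl_null hα g h⟩
    rintro g ⟨h, rfl⟩
    exact Stmt17Aux.subset_BSet α (Stmt17Aux.hasRotationNumber_conj hf h)

end
end
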